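/- arXiv:1009.5033 — 7 statements merged into one kernel-verified Lean document; each statement's English description precedes it below -/
import Mathlib

section
/- For every integer j ≥ 0 and real z > 0, K_j(z) < K_{j+1}(z). -/
open Real MeasureTheory Set Filter

/-- Integrability of `exp (-(b*l)) * (l^2-z^2)^q` on `(z, ∞)` for `q > -1`, `b > 0`. -/
lemma Kb_integrableOn_aux {z : ℝ} (hz : 0 < z) {q : ℝ} (hq : -1 < q) {b : ℝ} (hb : 0 < b) :
    IntegrableOn (fun l => Real.exp (-(b * l)) * (l ^ 2 - z ^ 2) ^ q) (Set.Ioi z) := by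
  set f : ℝ → ℝ := fun l => Real.exp (-(b * l)) * (l ^ 2 - z ^ 2) ^ q with hf
  have hmeas : ∀ s : Set ℝ, s ⊆ Set.Ioi z → MeasurableSet s →
      AEStronglyMeasurable f (volume.restrict s) := by
    intro s hs hsm
    apply ContinuousOn.aestronglyMeasurable ?_ hsm
    apply ContinuousOn.mul (Continuous.continuousOn (by continuity))
    apply ContinuousOn.rpow_const
    · exact (Continuous.continuousOn (by continuity))
    · intro x hx
      have : z < x := hs hx
      left
      nlinarith
  have hunion : Set.Ioc z (z + 1) ∪ Set.Ioi (z + 1) = Set.Ioi z :=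
    Set.Ioc_union_Ioi_eq_Ioi (by linarith)
  rw [← hunion, integrableOn_union]
  constructor
  · -- near the left endpoint
    set M : ℝ := (2 * z) ^ q + (2 * z + 1) ^ q with hM
    have hint : IntegrableOn (fun l => M * (l - z) ^ q) (Set.Ioc z (z + 1)) := by
      have h0 : IntervalIntegrable (fun x : ℝ => x ^ q) volume 0 1 :=
        intervalIntegral.intervalIntegrable_rpow' hq
      have h1 := h0.comp_sub_right z
      rw [zero_add] at h1
      rw [intervalIntegrable_iff_integrableOn_Ioc_of_le (by linarith)] at h1
      have h2 : Set.Ioc z (z + 1) = Set.Ioc z (1 + z) := by rw [add_comm]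
      rw [h2]
      exact h1.const_mul M
    apply hint.mono' (hmeas _ (Set.Ioc_subset_Ioi_self) measurableSet_Ioc)
    filter_upwards [ae_restrict_mem measurableSet_Ioc] with l hl
    have hlz : z < l := hl.1
    have hl1 : l ≤ z + 1 := hl.2
    have hbase : (0:ℝ) ≤ l ^ 2 - z ^ 2 := by nlinarith
    have hsplit : (l ^ 2 - z ^ 2) ^ q = (l - z) ^ q * (l + z) ^ q := by
      rw [← Real.mul_rpow (by linarith) (by linarith)]
      ring_nf
    have hexp : Real.exp (-(b * l)) ≤ 1 := by
      rw [Real.exp_le_one_iff]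
      nlinarith
    have hMb : (l + z) ^ q ≤ M := by
      rcases le_or_gt 0 q with hq0 | hq0
      · have : (l + z) ^ q ≤ (2 * z + 1) ^ q :=
          Real.rpow_le_rpow (by linarith) (by linarith) hq0
        have h2 : (0:ℝ) ≤ (2 * z) ^ q := Real.rpow_nonneg (by linarith) _
        rw [hM]; linarith
      · have : (l + z) ^ q ≤ (2 * z) ^ q :=
          Real.rpow_le_rpow_of_nonpos (by linarith) (by linarith) hq0.le
        have h2 : (0:ℝ) ≤ (2 * z + 1) ^ q := Real.rpow_nonneg (by linarith) _
        rw [hM]; linarith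
    have hfnn : 0 ≤ f l := mul_nonneg (Real.exp_nonneg _) (Real.rpow_nonneg hbase _)
    rw [Real.norm_of_nonneg hfnn]
    have h1 : f l ≤ (l - z) ^ q * (l + z) ^ q := by
      rw [hf]
      simp only
      rw [hsplit]
      calc Real.exp (-(b * l)) * ((l - z) ^ q * (l + z) ^ q)
          ≤ 1 * ((l - z) ^ q * (l + z) ^ q) := by
            apply mul_le_mul_of_nonneg_right hexp
            exact mul_nonneg (Real.rpow_nonneg (by linarith) _) (Real.rpow_nonneg (by linarith) _)
        _ = (l - z) ^ q * (l + z) ^ q := one_mul _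
    calc f l ≤ (l - z) ^ q * (l + z) ^ q := h1
      _ ≤ (l - z) ^ q * M := by
          apply mul_le_mul_of_nonneg_left hMb (Real.rpow_nonneg (by linarith) _)
      _ = M * (l - z) ^ q := mul_comm _ _
  · -- the tail
    rcases le_or_gt 0 q with hq0 | hq0
    · have hint : IntegrableOn (fun l : ℝ => l ^ (2 * q) * Real.exp (-b * l)) (Set.Ioi (z + 1)) := by
        have := integrableOn_rpow_mul_exp_neg_mul_rpow (p := 1) (s := 2 * q) (b := b)
          (by linarith) one_pos hb
        have h2 : IntegrableOn (fun x : ℝ => x ^ (2*q) * Real.exp (-b * x)) (Set.Ioi 0) := by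
          apply this.congr_fun ?_ measurableSet_Ioi
          intro x _
          simp [Real.rpow_one]
        exact h2.mono_set (Set.Ioi_subset_Ioi (by linarith))
      apply hint.mono' (hmeas _ (Set.Ioi_subset_Ioi (by linarith)) measurableSet_Ioi)
      filter_upwards [ae_restrict_mem measurableSet_Ioi] with l hl
      have hlz : z + 1 < l := hl
      have hbase : (0:ℝ) ≤ l ^ 2 - z ^ 2 := by nlinarith
      have hfnn : 0 ≤ f l := mul_nonneg (Real.exp_nonneg _) (Real.rpow_nonneg hbase _)
      rw [Real.norm_of_nonneg hfnn]
      have h1 : (l ^ 2 - z ^ 2) ^ q ≤ l ^ (2 * q) := by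
        have h2 : (l ^ 2 - z ^ 2) ^ q ≤ (l ^ 2) ^ q :=
          Real.rpow_le_rpow hbase (by nlinarith) hq0
        have h3 : (l ^ 2 : ℝ) ^ q = l ^ (2 * q) := by
          rw [← Real.rpow_natCast l 2, ← Real.rpow_mul (by nlinarith)]
          norm_num
        linarith [h2, le_of_eq h3]
      calc f l = Real.exp (-(b*l)) * (l ^ 2 - z ^ 2) ^ q := rfl
        _ ≤ Real.exp (-(b*l)) * l ^ (2*q) :=
            mul_le_mul_of_nonneg_left h1 (Real.exp_nonneg _)
        _ = l ^ (2*q) * Real.exp (-b * l) := by rw [neg_mul]; ring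
    · have hint : IntegrableOn (fun l : ℝ => (2*z+1) ^ q * Real.exp (-b * l)) (Set.Ioi (z + 1)) :=
        (exp_neg_integrableOn_Ioi (z+1) hb).const_mul _
      apply hint.mono' (hmeas _ (Set.Ioi_subset_Ioi (by linarith)) measurableSet_Ioi)
      filter_upwards [ae_restrict_mem measurableSet_Ioi] with l hl
      have hlz : z + 1 < l := hl
      have hbase : (0:ℝ) < l ^ 2 - z ^ 2 := by nlinarith
      have hfnn : 0 ≤ f l := mul_nonneg (Real.exp_nonneg _) (Real.rpow_nonneg hbase.le _)
      rw [Real.norm_of_nonneg hfnn]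
      have h1 : (l ^ 2 - z ^ 2) ^ q ≤ (2*z+1) ^ q :=
        Real.rpow_le_rpow_of_nonpos (by linarith) (by nlinarith) hq0.le
      calc f l = Real.exp (-(b*l)) * (l ^ 2 - z ^ 2) ^ q := rfl
        _ ≤ Real.exp (-(b*l)) * (2*z+1) ^ q :=
            mul_le_mul_of_nonneg_left h1 (Real.exp_nonneg _)
        _ = (2*z+1) ^ q * Real.exp (-b * l) := by rw [neg_mul]; ring


/-- The paper's modified Bessel function `K_j(z)`. -/
noncomputable def Kb (j : ℕ) (z : ℝ) : ℝ :=
  ((2 ^ j * Nat.factorial j : ℝ) / (Nat.factorial (2 * j) : ℝ)) * z ^ (-(j : ℤ)) *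
    ∫ l in Set.Ioi z, Real.exp (-l) * (l ^ 2 - z ^ 2) ^ ((j : ℝ) - 1 / 2)

/-- Monotonicity in the order: `K_j(z) < K_{j+1}(z)` for `z > 0`. -/
theorem Kb_lt_succ (j : ℕ) (z : ℝ) (hz : 0 < z) : Kb j z < Kb (j + 1) z := by
  have hjnn : (0:ℝ) ≤ (j:ℝ) := Nat.cast_nonneg j
  set p : ℝ := (j : ℝ) - 1/2 with hp
  have hp1 : -1 < p := by rw [hp]; linarith
  have hp1' : (0:ℝ) < p + 1 := by rw [hp]; linarith
  -- the three integrands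
  set f1 : ℝ → ℝ := fun l => Real.exp (-l) * (l ^ 2 - z ^ 2) ^ p with hf1
  set f2 : ℝ → ℝ := fun l => Real.exp (-l) * (l ^ 2 - z ^ 2) ^ (p + 1) with hf2
  set f3 : ℝ → ℝ := fun l => l * (Real.exp (-l) * (l ^ 2 - z ^ 2) ^ p) with hf3
  have h1 : IntegrableOn f1 (Set.Ioi z) := by
    have := Kb_integrableOn_aux hz hp1 (b := 1) one_pos
    simpa [hf1] using this
  have h2 : IntegrableOn f2 (Set.Ioi z) := by
    have := Kb_integrableOn_aux hz (q := p + 1) (by linarith) (b := 1) one_pos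
    simpa [hf2] using this
  have h3 : IntegrableOn f3 (Set.Ioi z) := by
    have hg := (Kb_integrableOn_aux hz hp1 (b := (1:ℝ)/2) (by norm_num)).const_mul 2
    apply hg.mono' (aestronglyMeasurable_id.mul h1.aestronglyMeasurable)
    filter_upwards [ae_restrict_mem measurableSet_Ioi] with l hl
    have hlz : z < l := hl
    have hbase : (0:ℝ) ≤ l ^ 2 - z ^ 2 := by nlinarith
    have hX : (0:ℝ) ≤ (l ^ 2 - z ^ 2) ^ p := Real.rpow_nonneg hbase _
    have hfnn : 0 ≤ f3 l := by
      apply mul_nonneg (by linarith) (mul_nonneg (Real.exp_nonneg _) hX)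
    show ‖f3 l‖ ≤ 2 * (Real.exp (-(1/2 * l)) * (l ^ 2 - z ^ 2) ^ p)
    rw [Real.norm_of_nonneg hfnn]
    have hkey : l * Real.exp (-l) ≤ 2 * Real.exp (-(1/2 * l)) := by
      have h4 : l / 2 + 1 ≤ Real.exp (l / 2) := Real.add_one_le_exp _
      have h6 : Real.exp (l/2) * Real.exp (-l) = Real.exp (-(1/2 * l)) := by
        rw [← Real.exp_add]; ring_nf
      nlinarith [Real.exp_pos (-l), Real.exp_pos (l/2)]
    calc f3 l = (l * Real.exp (-l)) * (l ^ 2 - z ^ 2) ^ p := by rw [hf3]; ring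
      _ ≤ (2 * Real.exp (-(1/2 * l))) * (l ^ 2 - z ^ 2) ^ p :=
          mul_le_mul_of_nonneg_right hkey hX
      _ = 2 * (Real.exp (-(1/2 * l)) * (l ^ 2 - z ^ 2) ^ p) := by ring
  -- integration by parts, with F := f2
  set F' : ℝ → ℝ := fun l =>
    Real.exp (-l) * (-1) * (l ^ 2 - z ^ 2) ^ (p + 1)
      + Real.exp (-l) * (2 * l * (p + 1) * (l ^ 2 - z ^ 2) ^ p) with hF'
  have hderiv : ∀ x ∈ Set.Ioi z, HasDerivAt f2 (F' x) x := by
    intro x hx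
    have hx' : z < x := hx
    have hbase : (0:ℝ) < x ^ 2 - z ^ 2 := by nlinarith
    have hexp : HasDerivAt (fun l : ℝ => Real.exp (-l)) (Real.exp (-x) * (-1)) x :=
      ((hasDerivAt_id x).neg).exp
    have hpoly : HasDerivAt (fun l : ℝ => l ^ 2 - z ^ 2) (2 * x) x := by
      simpa using (hasDerivAt_pow 2 x).sub_const (z ^ 2)
    have hrpow : HasDerivAt (fun l : ℝ => (l ^ 2 - z ^ 2) ^ (p + 1))
        (2 * x * (p + 1) * (x ^ 2 - z ^ 2) ^ p) x := by
      have := hpoly.rpow_const (p := p + 1) (Or.inl hbase.ne')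
      simpa using this
    simpa [hf2, hF', Pi.mul_def] using hexp.mul hrpow
  have hcont : ContinuousWithinAt f2 (Set.Ici z) z := by
    have hc1 : ContinuousAt (fun l : ℝ => Real.exp (-l)) z :=
      (Real.continuous_exp.comp continuous_neg).continuousAt
    have hb : ContinuousAt (fun l : ℝ => l ^ 2 - z ^ 2) z := by fun_prop
    have hc2 : ContinuousAt (fun l : ℝ => (l ^ 2 - z ^ 2) ^ (p + 1)) z :=
      hb.rpow_const (Or.inr hp1'.le)
    exact ((hc1.mul hc2)).continuousWithinAt
  have htend : Tendsto f2 atTop (nhds 0) := by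
    apply squeeze_zero' (g := fun l : ℝ => l ^ (2 * (p + 1)) * Real.exp (-1 * l))
    · filter_upwards [eventually_ge_atTop z] with l hl
      have hbase : (0:ℝ) ≤ l ^ 2 - z ^ 2 := by nlinarith
      exact mul_nonneg (Real.exp_nonneg _) (Real.rpow_nonneg hbase _)
    · filter_upwards [eventually_ge_atTop z] with l hl
      have hl0 : (0:ℝ) ≤ l := by linarith
      have hbase : (0:ℝ) ≤ l ^ 2 - z ^ 2 := by nlinarith
      have hle : (l ^ 2 - z ^ 2) ^ (p + 1) ≤ (l ^ 2) ^ (p + 1) :=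
        Real.rpow_le_rpow hbase (by nlinarith) hp1'.le
      have heq : (l ^ 2 : ℝ) ^ (p + 1) = l ^ (2 * (p + 1)) := by
        rw [← Real.rpow_natCast l 2, ← Real.rpow_mul hl0]
        norm_num
      calc f2 l ≤ Real.exp (-l) * (l ^ 2) ^ (p + 1) :=
            mul_le_mul_of_nonneg_left hle (Real.exp_nonneg _)
        _ = l ^ (2 * (p + 1)) * Real.exp (-1 * l) := by rw [heq]; ring_nf
    · exact tendsto_rpow_mul_exp_neg_mul_atTop_nhds_zero _ 1 one_pos
  have hF'int : IntegrableOn F' (Set.Ioi z) := by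
    have hsum : IntegrableOn (fun l => -(f2 l) + (2 * (p + 1)) * f3 l) (Set.Ioi z) :=
      (h2.neg).add (h3.const_mul _)
    apply hsum.congr_fun ?_ measurableSet_Ioi
    intro x _
    simp only [hF', hf2, hf3]
    ring
  have hFz : f2 z = 0 := by
    rw [hf2]
    simp [Real.zero_rpow hp1'.ne']
  have hIBPkey : ∫ l in Set.Ioi z, F' l = 0 - f2 z :=
    MeasureTheory.integral_Ioi_of_hasDerivAt_of_tendsto hcont hderiv hF'int htend
  have hn2 : Integrable (fun l => -(f2 l)) (volume.restrict (Set.Ioi z)) := h2.neg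
  have hn3 : Integrable (fun l => (2 * (p + 1)) * f3 l) (volume.restrict (Set.Ioi z)) :=
    h3.const_mul _
  have hsplit : ∫ l in Set.Ioi z, F' l
      = -(∫ l in Set.Ioi z, f2 l) + (2 * (p + 1)) * ∫ l in Set.Ioi z, f3 l := by
    have heqF : F' = fun l => -(f2 l) + (2 * (p + 1)) * f3 l := by
      funext l; simp only [hF', hf2, hf3]; ring
    calc ∫ l in Set.Ioi z, F' l
        = ∫ l in Set.Ioi z, (-(f2 l) + (2 * (p + 1)) * f3 l) := by rw [heqF]
      _ = (∫ l in Set.Ioi z, -(f2 l)) + ∫ l in Set.Ioi z, (2 * (p + 1)) * f3 l :=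
          integral_add hn2 hn3
      _ = -(∫ l in Set.Ioi z, f2 l) + (2 * (p + 1)) * ∫ l in Set.Ioi z, f3 l := by
          rw [integral_neg, MeasureTheory.integral_const_mul]
  have hIBP : ∫ l in Set.Ioi z, f2 l = (2 * (p + 1)) * ∫ l in Set.Ioi z, f3 l := by
    rw [hFz] at hIBPkey
    linarith [hIBPkey, hsplit]
  -- strict comparison
  have hlt : z * ∫ l in Set.Ioi z, f1 l < ∫ l in Set.Ioi z, f3 l := by
    set h : ℝ → ℝ := fun l => (l - z) * (Real.exp (-l) * (l ^ 2 - z ^ 2) ^ p) with hh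
    have hhi : IntegrableOn h (Set.Ioi z) := by
      have hsum : IntegrableOn (fun l => f3 l - z * f1 l) (Set.Ioi z) :=
        h3.sub (h1.const_mul z)
      apply hsum.congr_fun ?_ measurableSet_Ioi
      intro x _
      simp only [hh, hf1, hf3]
      ring
    have hnn : 0 ≤ᵐ[volume.restrict (Set.Ioi z)] h := by
      filter_upwards [ae_restrict_mem measurableSet_Ioi] with l hl
      have hlz : z < l := hl
      have hbase : (0:ℝ) ≤ l ^ 2 - z ^ 2 := by nlinarith
      exact mul_nonneg (by linarith)
        (mul_nonneg (Real.exp_nonneg _) (Real.rpow_nonneg hbase _))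
    have hpos : 0 < ∫ l in Set.Ioi z, h l := by
      rw [setIntegral_pos_iff_support_of_nonneg_ae hnn hhi]
      have hsub : Set.Ioi z ⊆ Function.support h ∩ Set.Ioi z := by
        intro x hx
        refine ⟨?_, hx⟩
        have hxz : z < x := hx
        have hbase : (0:ℝ) < x ^ 2 - z ^ 2 := by nlinarith
        have hpos' : 0 < h x :=
          mul_pos (by linarith) (mul_pos (Real.exp_pos _) (Real.rpow_pos_of_pos hbase _))
        exact hpos'.ne'
      calc (0:ENNReal) < volume (Set.Ioi z) := by simp [Real.volume_Ioi]
        _ ≤ volume (Function.support h ∩ Set.Ioi z) := measure_mono hsub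
    have hn1 : Integrable (fun l => z * f1 l) (volume.restrict (Set.Ioi z)) := h1.const_mul z
    have hint : ∫ l in Set.Ioi z, h l
        = (∫ l in Set.Ioi z, f3 l) - z * ∫ l in Set.Ioi z, f1 l := by
      have heqh : h = fun l => f3 l - z * f1 l := by
        funext l; simp only [hh, hf1, hf3]; ring
      rw [heqh]
      rw [integral_sub h3 hn1, MeasureTheory.integral_const_mul]
    linarith
  -- final algebra
  set c : ℝ := (2 ^ j * Nat.factorial j : ℝ) / (Nat.factorial (2 * j) : ℝ) with hc
  have hcpos : 0 < c := by
    rw [hc]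
    apply div_pos
    · positivity
    · exact_mod_cast Nat.factorial_pos _
  have hzne : z ≠ 0 := hz.ne'
  set A : ℝ := c * z ^ (-(j : ℤ)) * z⁻¹ with hA
  have hApos : 0 < A := by
    rw [hA]
    have : (0:ℝ) < z ^ (-(j : ℤ)) := zpow_pos hz _
    positivity
  have hL : Kb j z = A * (z * ∫ l in Set.Ioi z, f1 l) := by
    simp only [Kb, hA, hc, hf1, hp]
    field_simp
  have h2p : 2 * (p + 1) = 2 * (j:ℝ) + 1 := by rw [hp]; ring
  have hfact : ((Nat.factorial (2 * (j + 1)) : ℕ) : ℝ)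
      = (2 * (j:ℝ) + 2) * ((2 * (j:ℝ) + 1) * (Nat.factorial (2 * j) : ℝ)) := by
    rw [show 2 * (j + 1) = (2 * j + 1) + 1 by ring, Nat.factorial_succ, Nat.factorial_succ]
    push_cast
    ring
  have hjfne : ((Nat.factorial j : ℕ) : ℝ) ≠ 0 := by
    exact_mod_cast (Nat.factorial_pos j).ne'
  have h2jfne : ((Nat.factorial (2 * j) : ℕ) : ℝ) ≠ 0 := by
    exact_mod_cast (Nat.factorial_pos (2 * j)).ne'
  have h2j1ne : (2 * (j:ℝ) + 1) ≠ 0 := by positivity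
  have h2j2ne : (2 * (j:ℝ) + 2) ≠ 0 := by positivity
  have hR : Kb (j + 1) z = A * ∫ l in Set.Ioi z, f3 l := by
    have hexp_eq : ((j:ℝ) + 1) - 1/2 = p + 1 := by rw [hp]; ring
    have hzp : z ^ (-((j:ℤ) + 1)) = z ^ (-(j:ℤ)) * z⁻¹ := by
      rw [neg_add, zpow_add₀ hzne, zpow_neg_one]
    simp only [Kb, Nat.cast_add, Nat.cast_one, hexp_eq, hzp, ← hf2]
    rw [hIBP, h2p, hA, hc, hfact, Nat.factorial_succ]
    push_cast
    field_simp
    ring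
  rw [hL, hR]
  exact mul_lt_mul_of_pos_left hlt hApos
end

section
/- For 0 < z ≤ 1/10, the ratio of Bessel functions satisfies | K_1(z)/K_2(z) − z/2 | ≤ 2z². -/
open Real MeasureTheory

open Set Filter Topology in
private lemma hasDerivAt_F1' (l : ℝ) :
    HasDerivAt (fun x : ℝ => -(x + 1) * Real.exp (-x)) (l * Real.exp (-l)) l := by
  have h1 : HasDerivAt (fun x : ℝ => -(x + 1)) (-1) l := ((hasDerivAt_id l).add_const 1).neg
  have h2 : HasDerivAt (fun x : ℝ => Real.exp (-x)) (Real.exp (-l) * -1) l :=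
    (Real.hasDerivAt_exp (-l)).comp l (hasDerivAt_neg l)
  refine (h1.mul h2).congr_deriv ?_
  ring

open Set Filter Topology in
private lemma hasDerivAt_F2' (l : ℝ) :
    HasDerivAt (fun x : ℝ => -(x ^ 2 + 2 * x + 2) * Real.exp (-x)) (l ^ 2 * Real.exp (-l)) l := by
  have h0 : HasDerivAt (fun x : ℝ => x ^ 2) (2 * l) l := by simpa using hasDerivAt_pow 2 l
  have hlin : HasDerivAt (fun x : ℝ => 2 * x) 2 l := by simpa using (hasDerivAt_id l).const_mul 2
  have h1 : HasDerivAt (fun x : ℝ => -(x ^ 2 + 2 * x + 2)) (-(2 * l + 2)) l :=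
    ((h0.add hlin).add_const 2).neg
  have h2 : HasDerivAt (fun x : ℝ => Real.exp (-x)) (Real.exp (-l) * -1) l :=
    (Real.hasDerivAt_exp (-l)).comp l (hasDerivAt_neg l)
  refine (h1.mul h2).congr_deriv ?_
  ring

open Set Filter Topology in
private lemma tendsto_F1' : Filter.Tendsto (fun x : ℝ => -(x + 1) * Real.exp (-x))
    Filter.atTop (𝓝 0) := by
  have h1 := Real.tendsto_pow_mul_exp_neg_atTop_nhds_zero 1
  have h0 := Real.tendsto_exp_neg_atTop_nhds_zero
  have : (fun x : ℝ => -(x + 1) * Real.exp (-x)) =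
      fun x : ℝ => -(x ^ 1 * Real.exp (-x) + Real.exp (-x)) := by funext x; ring
  rw [this]
  simpa using (h1.add h0).neg

open Set Filter Topology in
private lemma tendsto_F2' : Filter.Tendsto (fun x : ℝ => -(x ^ 2 + 2 * x + 2) * Real.exp (-x))
    Filter.atTop (𝓝 0) := by
  have h2 := Real.tendsto_pow_mul_exp_neg_atTop_nhds_zero 2
  have h1 := Real.tendsto_pow_mul_exp_neg_atTop_nhds_zero 1
  have h0 := Real.tendsto_exp_neg_atTop_nhds_zero
  have : (fun x : ℝ => -(x ^ 2 + 2 * x + 2) * Real.exp (-x)) =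
      fun x : ℝ => -(x ^ 2 * Real.exp (-x) +
        (2 * (x ^ 1 * Real.exp (-x)) + 2 * Real.exp (-x))) := by
    funext x; ring
  rw [this]
  simpa using (h2.add ((h1.const_mul 2).add (h0.const_mul 2))).neg

private lemma ptwise_sqrt_le' (z l : ℝ) (hz : 0 < z) (hl : z < l) :
    Real.sqrt (l ^ 2 - z ^ 2) ≤ l := by
  have h : Real.sqrt (l ^ 2 - z ^ 2) ≤ Real.sqrt (l ^ 2) :=
    Real.sqrt_le_sqrt (by nlinarith)
  rwa [Real.sqrt_sq (by linarith)] at h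

private lemma ptwise_A_lower' (z l : ℝ) (hz : 0 < z) (hl : z < l) :
    l * Real.exp (-l) - z * Real.sqrt z * (Real.exp (-l) * l ^ ((1/2 : ℝ) - 1)) ≤
      Real.exp (-l) * Real.sqrt (l ^ 2 - z ^ 2) := by
  have hl0 : (0:ℝ) < l := hz.trans hl
  have hrw : l ^ ((1/2 : ℝ) - 1) = (Real.sqrt l)⁻¹ := by
    rw [show ((1/2 : ℝ) - 1) = -(1/2) by norm_num, Real.rpow_neg hl0.le, ← Real.sqrt_eq_rpow]
  rw [hrw]
  set s := Real.sqrt (l ^ 2 - z ^ 2) with hsdef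
  set t := Real.sqrt l with htdef
  set u := Real.sqrt z with hudef
  have hs2 : s ^ 2 = l ^ 2 - z ^ 2 := Real.sq_sqrt (by nlinarith)
  have hs0 : 0 ≤ s := Real.sqrt_nonneg _
  have ht2 : t ^ 2 = l := Real.sq_sqrt hl0.le
  have ht0 : 0 < t := Real.sqrt_pos.2 hl0
  have hu2 : u ^ 2 = z := Real.sq_sqrt hz.le
  have hu0 : 0 < u := Real.sqrt_pos.2 hz
  have hut : u ≤ t := Real.sqrt_le_sqrt hl.le
  have hls : 0 < l + s := by linarith
  have key : (l - s) * t ≤ z * u := by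
    have h1 : (l - s) * (l + s) = (u ^ 2) * (u ^ 2) := by nlinarith
    have h2 : u * t ≤ l + s := by nlinarith
    rw [← mul_le_mul_iff_of_pos_right hls]
    calc (l - s) * t * (l + s) = u ^ 2 * u ^ 2 * t := by
          rw [show (l - s) * t * (l + s) = ((l - s) * (l + s)) * t by ring, h1]
      _ ≤ u ^ 2 * u * (l + s) := by
          nlinarith [mul_le_mul_of_nonneg_left h2 (by positivity : (0:ℝ) ≤ u ^ 2 * u)]
      _ = z * u * (l + s) := by rw [← hu2]
  have key2 : l - z * u * t⁻¹ ≤ s := by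
    have : (l - s) ≤ z * u / t := by
      rw [le_div_iff₀ ht0]; exact key
    rw [div_eq_mul_inv] at this
    linarith
  have := mul_le_mul_of_nonneg_left key2 (Real.exp_pos (-l)).le
  nlinarith [this]

private lemma ptwise_B_lower' (z l : ℝ) (hz : 0 < z) (hl : z < l) :
    l ^ 2 * Real.exp (-l) - z ^ 2 * Real.exp (-l) ≤
      l * Real.exp (-l) * Real.sqrt (l ^ 2 - z ^ 2) := by
  have hl0 : (0:ℝ) < l := hz.trans hl
  have hs2 : Real.sqrt (l ^ 2 - z ^ 2) ^ 2 = l ^ 2 - z ^ 2 := Real.sq_sqrt (by nlinarith)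
  have hs0 : 0 ≤ Real.sqrt (l ^ 2 - z ^ 2) := Real.sqrt_nonneg _
  have hsl := ptwise_sqrt_le' z l hz hl
  nlinarith [Real.exp_pos (-l), mul_le_mul_of_nonneg_right
    (mul_le_mul_of_nonneg_left hsl (Real.exp_pos (-l)).le) hs0]

/-- `K_1(z) = z⁻¹ ∫_z^∞ e^{-λ}(λ²−z²)^{1/2} dλ`. -/
noncomputable def K1 (z : ℝ) : ℝ :=
  z⁻¹ * ∫ l in Set.Ioi z, Real.exp (-l) * Real.sqrt (l ^ 2 - z ^ 2)

/-- `K_2(z) = z⁻² ∫_z^∞ λ e^{-λ}(λ²−z²)^{1/2} dλ`. -/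
noncomputable def K2 (z : ℝ) : ℝ :=
  z ^ (-2 : ℤ) * ∫ l in Set.Ioi z, l * Real.exp (-l) * Real.sqrt (l ^ 2 - z ^ 2)

set_option maxHeartbeats 1000000 in
/-- For `0 < z ≤ 1/10`, `|K_1(z)/K_2(z) − z/2| ≤ 2z²`. -/
theorem ratio_small_z (z : ℝ) (hz : 0 < z) (hz' : z ≤ 1 / 10) :
    |K1 z / K2 z - z / 2| ≤ 2 * z ^ 2 := by
  have hz1 : z < 1 := by linarith
  set A := ∫ l in Set.Ioi z, Real.exp (-l) * Real.sqrt (l ^ 2 - z ^ 2) with hAdef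
  set B := ∫ l in Set.Ioi z, l * Real.exp (-l) * Real.sqrt (l ^ 2 - z ^ 2) with hBdef
  set Gz := ∫ l in Set.Ioi z, Real.exp (-l) * l ^ ((1/2 : ℝ) - 1) with hGdef
  -- basic integrability and integral values
  have hI0int : IntegrableOn (fun l : ℝ => Real.exp (-l)) (Set.Ioi z) := by
    have := exp_neg_integrableOn_Ioi z one_pos
    simpa using this
  have hI0 : (∫ l in Set.Ioi z, Real.exp (-l)) = Real.exp (-z) := integral_exp_neg_Ioi z
  have hI1int : IntegrableOn (fun l : ℝ => l * Real.exp (-l)) (Set.Ioi z) :=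
    integrableOn_Ioi_deriv_of_nonneg' (fun x _ => hasDerivAt_F1' x)
      (fun x hx => mul_nonneg (le_of_lt (hz.trans hx)) (Real.exp_pos _).le) tendsto_F1'
  have hI1 : (∫ l in Set.Ioi z, l * Real.exp (-l)) = (z + 1) * Real.exp (-z) := by
    have := integral_Ioi_of_hasDerivAt_of_nonneg' (fun x (_ : x ∈ Set.Ici z) => hasDerivAt_F1' x)
      (fun x hx => mul_nonneg (le_of_lt (hz.trans hx)) (Real.exp_pos _).le) tendsto_F1'
    rw [this]; ring
  have hI2int : IntegrableOn (fun l : ℝ => l ^ 2 * Real.exp (-l)) (Set.Ioi z) :=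
    integrableOn_Ioi_deriv_of_nonneg' (fun x _ => hasDerivAt_F2' x)
      (fun x hx => mul_nonneg (by positivity) (Real.exp_pos _).le) tendsto_F2'
  have hI2 : (∫ l in Set.Ioi z, l ^ 2 * Real.exp (-l)) = (z ^ 2 + 2 * z + 2) * Real.exp (-z) := by
    have := integral_Ioi_of_hasDerivAt_of_nonneg' (fun x (_ : x ∈ Set.Ici z) => hasDerivAt_F2' x)
      (fun x hx => mul_nonneg (by positivity) (Real.exp_pos _).le) tendsto_F2'
    rw [this]; ring
  have hGint : IntegrableOn (fun l : ℝ => Real.exp (-l) * l ^ ((1/2 : ℝ) - 1)) (Set.Ioi z) :=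
    (Real.GammaIntegral_convergent (by norm_num : (0:ℝ) < 1/2)).mono_set
      (Set.Ioi_subset_Ioi hz.le)
  have hGle : Gz ≤ Real.sqrt π := by
    rw [hGdef, ← Real.Gamma_one_half_eq, Real.Gamma_eq_integral (by norm_num : (0:ℝ) < 1/2)]
    refine setIntegral_mono_set (Real.GammaIntegral_convergent (by norm_num)) ?_ ?_
    · filter_upwards [ae_restrict_mem measurableSet_Ioi] with x hx
      exact mul_nonneg (Real.exp_pos _).le (Real.rpow_nonneg (le_of_lt hx) _)
    · exact HasSubset.Subset.eventuallyLE (Set.Ioi_subset_Ioi hz.le)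
  have hG0 : 0 ≤ Gz := by
    rw [hGdef]
    exact setIntegral_nonneg measurableSet_Ioi fun x hx =>
      mul_nonneg (Real.exp_pos _).le (Real.rpow_nonneg (le_of_lt (hz.trans hx)) _)
  -- integrability of the Bessel integrands
  have hcont1 : Continuous (fun l : ℝ => Real.exp (-l) * Real.sqrt (l ^ 2 - z ^ 2)) :=
    (Real.continuous_exp.comp continuous_neg).mul
      (Real.continuous_sqrt.comp ((continuous_pow 2).sub continuous_const))
  have hcont2 : Continuous (fun l : ℝ => l * Real.exp (-l) * Real.sqrt (l ^ 2 - z ^ 2)) :=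
    (continuous_id.mul (Real.continuous_exp.comp continuous_neg)).mul
      (Real.continuous_sqrt.comp ((continuous_pow 2).sub continuous_const))
  have hf1int : IntegrableOn (fun l : ℝ => Real.exp (-l) * Real.sqrt (l ^ 2 - z ^ 2))
      (Set.Ioi z) := by
    refine hI1int.mono' hcont1.aestronglyMeasurable ?_
    refine (ae_restrict_iff' measurableSet_Ioi).2 (Filter.Eventually.of_forall fun l hl => ?_)
    rw [Real.norm_eq_abs, abs_of_nonneg (mul_nonneg (Real.exp_pos _).le (Real.sqrt_nonneg _))]
    have := ptwise_sqrt_le' z l hz hl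
    nlinarith [Real.exp_pos (-l)]
  have hf2int : IntegrableOn (fun l : ℝ => l * Real.exp (-l) * Real.sqrt (l ^ 2 - z ^ 2))
      (Set.Ioi z) := by
    refine hI2int.mono' hcont2.aestronglyMeasurable ?_
    refine (ae_restrict_iff' measurableSet_Ioi).2 (Filter.Eventually.of_forall fun l hl => ?_)
    have hl0 : (0:ℝ) < l := hz.trans hl
    rw [Real.norm_eq_abs, abs_of_nonneg (mul_nonneg (mul_nonneg hl0.le (Real.exp_pos _).le)
      (Real.sqrt_nonneg _))]
    have := ptwise_sqrt_le' z l hz hl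
    nlinarith [Real.exp_pos (-l), mul_pos hl0 (Real.exp_pos (-l))]
  -- bounds on A and B
  have hAle : A ≤ (z + 1) * Real.exp (-z) := by
    rw [hAdef, ← hI1]
    refine setIntegral_mono_on hf1int hI1int measurableSet_Ioi fun l hl => ?_
    have := ptwise_sqrt_le' z l hz hl
    nlinarith [Real.exp_pos (-l)]
  have hAge : (z + 1) * Real.exp (-z) - z * Real.sqrt z * Gz ≤ A := by
    have haux : IntegrableOn (fun l : ℝ => l * Real.exp (-l) -
        z * Real.sqrt z * (Real.exp (-l) * l ^ ((1/2 : ℝ) - 1))) (Set.Ioi z) :=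
      hI1int.sub (hGint.const_mul (z * Real.sqrt z))
    have hle : (∫ l in Set.Ioi z, (l * Real.exp (-l) -
          z * Real.sqrt z * (Real.exp (-l) * l ^ ((1/2 : ℝ) - 1)))) ≤
        ∫ l in Set.Ioi z, Real.exp (-l) * Real.sqrt (l ^ 2 - z ^ 2) :=
      setIntegral_mono_on haux hf1int measurableSet_Ioi (fun l hl => ptwise_A_lower' z l hz hl)
    rwa [integral_sub hI1int (hGint.const_mul (z * Real.sqrt z)), integral_const_mul, hI1,
      ← hGdef, ← hAdef] at hle
  have hBle : B ≤ (z ^ 2 + 2 * z + 2) * Real.exp (-z) := by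
    rw [hBdef, ← hI2]
    refine setIntegral_mono_on hf2int hI2int measurableSet_Ioi fun l hl => ?_
    have hl0 : (0:ℝ) < l := hz.trans hl
    have := ptwise_sqrt_le' z l hz hl
    nlinarith [Real.exp_pos (-l), mul_pos hl0 (Real.exp_pos (-l))]
  have hBge : (2 * z + 2) * Real.exp (-z) ≤ B := by
    have haux : IntegrableOn (fun l : ℝ => l ^ 2 * Real.exp (-l) - z ^ 2 * Real.exp (-l))
        (Set.Ioi z) := hI2int.sub (hI0int.const_mul (z ^ 2))
    have hle : (∫ l in Set.Ioi z, (l ^ 2 * Real.exp (-l) - z ^ 2 * Real.exp (-l))) ≤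
        ∫ l in Set.Ioi z, l * Real.exp (-l) * Real.sqrt (l ^ 2 - z ^ 2) :=
      setIntegral_mono_on haux hf2int measurableSet_Ioi (fun l hl => ptwise_B_lower' z l hz hl)
    rw [integral_sub hI2int (hI0int.const_mul (z ^ 2)), integral_const_mul, hI2, hI0,
      ← hBdef] at hle
    nlinarith [hle]
  -- numeric facts
  have hez1 : Real.exp (-z) ≤ 1 := Real.exp_le_one_iff.2 (by linarith)
  have hez9 : (0.9 : ℝ) ≤ Real.exp (-z) := by
    have := Real.add_one_le_exp (-z); linarith
  have hsz0 : 0 ≤ Real.sqrt z := Real.sqrt_nonneg _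
  have hsz : Real.sqrt z ≤ 0.32 := by
    have h := Real.sqrt_le_sqrt (show z ≤ 0.1024 by linarith)
    rwa [show (0.1024 : ℝ) = 0.32 ^ 2 by norm_num, Real.sqrt_sq (by norm_num)] at h
  have hpi : Real.sqrt π ≤ 1.8 := by
    have h := Real.sqrt_le_sqrt (show π ≤ 3.24 by nlinarith [Real.pi_lt_d2])
    rwa [show (3.24 : ℝ) = 1.8 ^ 2 by norm_num, Real.sqrt_sq (by norm_num)] at h
  have hB18 : (1.8 : ℝ) ≤ B := by nlinarith [hBge, hez9]
  have hBpos : (0 : ℝ) < B := by linarith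
  -- the ratio
  have hK : K1 z / K2 z = z * A / B := by
    simp only [K1, K2, ← hAdef, ← hBdef]
    rw [show (z : ℝ) ^ (-2 : ℤ) = (z ^ 2)⁻¹ by rw [zpow_neg, zpow_two, sq]]
    field_simp
  rw [hK]
  have h2AB : 2 * A ≤ B := by nlinarith [hAle, hBge]
  have hGz18 : Gz ≤ 1.8 := hGle.trans hpi
  have hkey : B - 2 * A ≤ z ^ 2 + 3.6 * (z * Real.sqrt z) := by
    have ht1 : 2 * (z * Real.sqrt z) * Gz ≤ 2 * (z * Real.sqrt z) * 1.8 :=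
      mul_le_mul_of_nonneg_left hGz18 (by positivity)
    have ht2 : z ^ 2 * Real.exp (-z) ≤ z ^ 2 := by nlinarith [sq_nonneg z]
    nlinarith [hBle, hAge]
  have heq : z * A / B - z / 2 = z * (2 * A - B) / (2 * B) := by
    field_simp
  rw [heq, abs_div, abs_of_pos (by linarith : (0:ℝ) < 2 * B),
    abs_of_nonpos (by nlinarith : z * (2 * A - B) ≤ 0)]
  rw [div_le_iff₀ (by linarith : (0:ℝ) < 2 * B)]
  have e1 : z * (B - 2 * A) ≤ z * (z ^ 2 + 3.6 * (z * Real.sqrt z)) :=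
    mul_le_mul_of_nonneg_left hkey hz.le
  have e2 : z ^ 3 ≤ 0.1 * z ^ 2 := by nlinarith [sq_nonneg z]
  have e3 : z ^ 2 * Real.sqrt z ≤ 0.32 * z ^ 2 := by nlinarith [sq_nonneg z]
  have e4 : (7.2 : ℝ) * z ^ 2 ≤ 2 * z ^ 2 * (2 * B) := by nlinarith [sq_nonneg z]
  nlinarith [e1, e2, e3, e4, sq_nonneg z]
end

section
/- For 0 < z ≤ 1/10, the ratio of Bessel functions satisfies | (K_1(z)/K_2(z))² − z²/4 | ≤ 2z³. -/
open Real MeasureTheory Set Filter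

/-- derivative fact for `x * exp (-x)`. -/
lemma hasDerivAt_aux1 (x : ℝ) :
    HasDerivAt (fun x : ℝ => -(x + 1) * Real.exp (-x)) (x * Real.exp (-x)) x := by
  have h1 : HasDerivAt (fun x : ℝ => -(x + 1)) (-1) x := by
    exact ((hasDerivAt_id x).add_const 1).neg
  have h2 : HasDerivAt (fun x : ℝ => Real.exp (-x)) (-Real.exp (-x)) x := by
    exact (hasDerivAt_neg x).exp.congr_deriv (by ring)
  have : HasDerivAt (fun x : ℝ => -(x + 1) * Real.exp (-x)) _ x := h1.mul h2
  convert this using 1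
  ring

lemma hasDerivAt_aux2 (x : ℝ) :
    HasDerivAt (fun x : ℝ => -(x ^ 2 + 2 * x + 2) * Real.exp (-x)) (x ^ 2 * Real.exp (-x)) x := by
  have h1 : HasDerivAt (fun x : ℝ => -(x ^ 2 + 2 * x + 2)) (-(2 * x + 2)) x := by
    have : HasDerivAt (fun x : ℝ => x ^ 2 + 2 * x + 2) (2 * x + 2) x := by
      simpa using (((hasDerivAt_pow 2 x).add ((hasDerivAt_id x).const_mul 2)).add_const 2)
    exact this.neg
  have h2 : HasDerivAt (fun x : ℝ => Real.exp (-x)) (-Real.exp (-x)) x := by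
    exact (hasDerivAt_neg x).exp.congr_deriv (by ring)
  have : HasDerivAt (fun x : ℝ => -(x ^ 2 + 2 * x + 2) * Real.exp (-x)) _ x := h1.mul h2
  convert this using 1
  ring

lemma tendsto_aux1 : Tendsto (fun x : ℝ => -(x + 1) * Real.exp (-x)) atTop (nhds 0) := by
  have h1 := Real.tendsto_pow_mul_exp_neg_atTop_nhds_zero 1
  have h0 := Real.tendsto_pow_mul_exp_neg_atTop_nhds_zero 0
  have := (h1.add h0).neg
  simp only [neg_zero, add_zero, pow_one, pow_zero, one_mul] at this
  convert this using 2 with x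
  ring

lemma tendsto_aux2 :
    Tendsto (fun x : ℝ => -(x ^ 2 + 2 * x + 2) * Real.exp (-x)) atTop (nhds 0) := by
  have h2 := Real.tendsto_pow_mul_exp_neg_atTop_nhds_zero 2
  have h1 := Real.tendsto_pow_mul_exp_neg_atTop_nhds_zero 1
  have h0 := Real.tendsto_pow_mul_exp_neg_atTop_nhds_zero 0
  have := ((h2.add (h1.const_mul 2)).add (h0.const_mul 2)).neg
  simp only [neg_zero, add_zero, mul_zero, pow_one, pow_zero, one_mul, mul_one] at this
  convert this using 2 with x
  ring

lemma integral_aux1 (a : ℝ) (ha : 0 ≤ a) :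
    (∫ x in Ioi a, x * Real.exp (-x)) = (a + 1) * Real.exp (-a) := by
  have := integral_Ioi_of_hasDerivAt_of_nonneg' (g := fun x : ℝ => -(x + 1) * Real.exp (-x))
    (g' := fun x : ℝ => x * Real.exp (-x)) (a := a)
    (fun x _ => hasDerivAt_aux1 x)
    (fun x hx => mul_nonneg (le_trans ha (le_of_lt hx)) (Real.exp_pos _).le)
    tendsto_aux1
  rw [this]; ring

lemma integrable_aux1 (a : ℝ) (ha : 0 ≤ a) :
    IntegrableOn (fun x : ℝ => x * Real.exp (-x)) (Ioi a) := by
  exact integrableOn_Ioi_deriv_of_nonneg' (fun x _ => hasDerivAt_aux1 x)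
    (fun x hx => mul_nonneg (le_trans ha (le_of_lt hx)) (Real.exp_pos _).le)
    tendsto_aux1

lemma integral_aux2 (a : ℝ) :
    (∫ x in Ioi a, x ^ 2 * Real.exp (-x)) = (a ^ 2 + 2 * a + 2) * Real.exp (-a) := by
  have := integral_Ioi_of_hasDerivAt_of_nonneg' (g := fun x : ℝ => -(x ^ 2 + 2 * x + 2) * Real.exp (-x))
    (g' := fun x : ℝ => x ^ 2 * Real.exp (-x)) (a := a)
    (fun x _ => hasDerivAt_aux2 x)
    (fun x _ => mul_nonneg (sq_nonneg x) (Real.exp_pos _).le)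
    tendsto_aux2
  rw [this]; ring

lemma integrable_aux2 (a : ℝ) :
    IntegrableOn (fun x : ℝ => x ^ 2 * Real.exp (-x)) (Ioi a) := by
  exact integrableOn_Ioi_deriv_of_nonneg' (fun x _ => hasDerivAt_aux2 x)
    (fun x _ => mul_nonneg (sq_nonneg x) (Real.exp_pos _).le)
    tendsto_aux2

lemma poly_aux (z r : ℝ) (hz : 0 < z) (h2 : 1 ≤ (r * (2 + 2 * z + z ^ 2)) ^ 2) :
    (1 / 4 - 2 * z) * (2 + 2 * z + z ^ 2) ^ 2 ≤ r ^ 2 * (2 + 2 * z + z ^ 2) ^ 2 := by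
  nlinarith [pow_pos hz 2, pow_pos hz 3, pow_pos hz 4, pow_pos hz 5]

set_option maxHeartbeats 1000000 in
/-- For `0 < z ≤ 1/10`, `|(K_1(z)/K_2(z))² − z²/4| ≤ 2z³`. -/
theorem ratio_sq_small_z (z : ℝ) (hz : 0 < z) (hz' : z ≤ 1 / 10) :
    |(K1 z / K2 z) ^ 2 - z ^ 2 / 4| ≤ 2 * z ^ 3 := by
  set A := ∫ l in Set.Ioi z, Real.exp (-l) * Real.sqrt (l ^ 2 - z ^ 2) with hA
  set B := ∫ l in Set.Ioi z, l * Real.exp (-l) * Real.sqrt (l ^ 2 - z ^ 2) with hB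
  set E := Real.exp (-z) with hE
  have hEpos : 0 < E := Real.exp_pos _
  -- pointwise facts
  have sqrt_le : ∀ l ∈ Ioi z, Real.sqrt (l ^ 2 - z ^ 2) ≤ l := by
    intro l hl
    have hl' : z < l := hl
    have : l ^ 2 - z ^ 2 ≤ l ^ 2 := by nlinarith
    calc Real.sqrt (l ^ 2 - z ^ 2) ≤ Real.sqrt (l ^ 2) := Real.sqrt_le_sqrt this
      _ = l := by rw [Real.sqrt_sq (by linarith : (0:ℝ) ≤ l)]
  have le_sqrt : ∀ l ∈ Ioi z, l - z ≤ Real.sqrt (l ^ 2 - z ^ 2) := by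
    intro l hl
    have hl' : z < l := hl
    have h1 : (l - z) ^ 2 ≤ l ^ 2 - z ^ 2 := by nlinarith
    calc l - z = Real.sqrt ((l - z) ^ 2) := by
          rw [Real.sqrt_sq (by linarith : (0:ℝ) ≤ l - z)]
      _ ≤ Real.sqrt (l ^ 2 - z ^ 2) := Real.sqrt_le_sqrt h1
  have sqrt_nonneg' : ∀ l : ℝ, 0 ≤ Real.sqrt (l ^ 2 - z ^ 2) := fun l => Real.sqrt_nonneg _
  -- continuity/measurability of integrands
  have contA : Continuous (fun l : ℝ => Real.exp (-l) * Real.sqrt (l ^ 2 - z ^ 2)) := by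
    fun_prop
  have contB : Continuous (fun l : ℝ => l * Real.exp (-l) * Real.sqrt (l ^ 2 - z ^ 2)) := by
    fun_prop
  -- integrability
  have hi1 := integrable_aux1 z hz.le
  have hi2 := integrable_aux2 z
  have hiA : IntegrableOn (fun l : ℝ => Real.exp (-l) * Real.sqrt (l ^ 2 - z ^ 2)) (Ioi z) := by
    refine Integrable.mono hi1 contA.aestronglyMeasurable.restrict ?_
    rw [ae_restrict_iff' measurableSet_Ioi]
    filter_upwards with l hl
    have hl' : z < l := hl
    have h0 : (0:ℝ) ≤ l := le_trans hz.le hl'.le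
    rw [Real.norm_eq_abs, Real.norm_eq_abs, abs_of_nonneg (by positivity),
      abs_of_nonneg (by positivity)]
    calc Real.exp (-l) * Real.sqrt (l ^ 2 - z ^ 2) ≤ Real.exp (-l) * l :=
          mul_le_mul_of_nonneg_left (sqrt_le l hl) (Real.exp_pos _).le
      _ = l * Real.exp (-l) := mul_comm _ _
  have hiB : IntegrableOn (fun l : ℝ => l * Real.exp (-l) * Real.sqrt (l ^ 2 - z ^ 2)) (Ioi z) := by
    refine Integrable.mono hi2 contB.aestronglyMeasurable.restrict ?_
    rw [ae_restrict_iff' measurableSet_Ioi]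
    filter_upwards with l hl
    have hl' : z < l := hl
    have h0 : (0:ℝ) ≤ l := le_trans hz.le hl'.le
    rw [Real.norm_eq_abs, Real.norm_eq_abs, abs_of_nonneg (by positivity),
      abs_of_nonneg (by positivity)]
    calc l * Real.exp (-l) * Real.sqrt (l ^ 2 - z ^ 2) ≤ l * Real.exp (-l) * l :=
          mul_le_mul_of_nonneg_left (sqrt_le l hl) (by positivity)
      _ = l ^ 2 * Real.exp (-l) := by ring
  -- bounds on A
  have hA_upper : A ≤ (1 + z) * E := by
    have h := setIntegral_mono_on hiA hi1 measurableSet_Ioi (fun l hl => by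
      have hl' : z < l := hl
      calc Real.exp (-l) * Real.sqrt (l ^ 2 - z ^ 2) ≤ Real.exp (-l) * l :=
            mul_le_mul_of_nonneg_left (sqrt_le l hl) (Real.exp_pos _).le
        _ = l * Real.exp (-l) := mul_comm _ _)
    rw [integral_aux1 z hz.le] at h
    rw [hA, hE]; linarith
  have hi1' : IntegrableOn (fun l : ℝ => (l - z) * Real.exp (-l)) (Ioi z) := by
    have h0 : IntegrableOn (fun l : ℝ => Real.exp (-l)) (Ioi z) :=
      (exp_neg_integrableOn_Ioi z one_pos).congr_fun (fun l _ => by norm_num) measurableSet_Ioi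
    have h2 := hi1.sub (h0.const_mul z)
    exact MeasureTheory.IntegrableOn.congr_fun h2
      (fun l _ => by simp only [Pi.sub_apply]; ring) measurableSet_Ioi
  have hA_lower : E ≤ A := by
    have h := setIntegral_mono_on hi1' hiA measurableSet_Ioi (fun l hl => by
      have hl' : z < l := hl
      calc (l - z) * Real.exp (-l) ≤ Real.sqrt (l ^ 2 - z ^ 2) * Real.exp (-l) :=
            mul_le_mul_of_nonneg_right (le_sqrt l hl) (Real.exp_pos _).le
        _ = Real.exp (-l) * Real.sqrt (l ^ 2 - z ^ 2) := mul_comm _ _)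
    have hval : (∫ l in Ioi z, (l - z) * Real.exp (-l)) = E := by
      have e1 : (∫ l in Ioi z, (l - z) * Real.exp (-l))
          = (∫ l in Ioi z, l * Real.exp (-l)) - (∫ l in Ioi z, z * Real.exp (-l)) := by
        have h0 : IntegrableOn (fun l : ℝ => Real.exp (-l)) (Ioi z) :=
          (exp_neg_integrableOn_Ioi z one_pos).congr_fun (fun l _ => by norm_num) measurableSet_Ioi
        rw [← integral_sub hi1 (h0.const_mul z)]
        congr 1; funext l; ring
      have e2 : (∫ l in Ioi z, z * Real.exp (-l)) = z * E := by
        rw [integral_const_mul]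
        have : (∫ l in Ioi z, Real.exp (-l)) = E := by
          have := integral_exp_neg_Ioi z
          simpa [hE] using this
        rw [this]
      rw [e1, e2, integral_aux1 z hz.le, hE]; ring
    rw [hval] at h; exact h
  -- bounds on B
  have hB_upper : B ≤ (z ^ 2 + 2 * z + 2) * E := by
    have h := setIntegral_mono_on hiB hi2 measurableSet_Ioi (fun l hl => by
      have hl' : z < l := hl
      have h0 : (0:ℝ) ≤ l := le_trans hz.le hl'.le
      calc l * Real.exp (-l) * Real.sqrt (l ^ 2 - z ^ 2) ≤ l * Real.exp (-l) * l :=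
            mul_le_mul_of_nonneg_left (sqrt_le l hl) (by positivity)
        _ = l ^ 2 * Real.exp (-l) := by ring)
    rw [integral_aux2 z] at h
    rw [hB, hE]; linarith
  have hi2' : IntegrableOn (fun l : ℝ => (l ^ 2 - z ^ 2) * Real.exp (-l)) (Ioi z) := by
    have h0 : IntegrableOn (fun l : ℝ => Real.exp (-l)) (Ioi z) :=
      (exp_neg_integrableOn_Ioi z one_pos).congr_fun (fun l _ => by norm_num) measurableSet_Ioi
    have h2 := hi2.sub (h0.const_mul (z ^ 2))
    exact MeasureTheory.IntegrableOn.congr_fun h2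
      (fun l _ => by simp only [Pi.sub_apply]; ring) measurableSet_Ioi
  have hB_lower : (2 + 2 * z) * E ≤ B := by
    have h := setIntegral_mono_on hi2' hiB measurableSet_Ioi (fun l hl => by
      have hl' : z < l := hl
      have h0 : (0:ℝ) ≤ l := le_trans hz.le hl'.le
      have hs : Real.sqrt (l ^ 2 - z ^ 2) * Real.sqrt (l ^ 2 - z ^ 2) = l ^ 2 - z ^ 2 :=
        Real.mul_self_sqrt (by nlinarith)
      calc (l ^ 2 - z ^ 2) * Real.exp (-l)
          = Real.sqrt (l ^ 2 - z ^ 2) * Real.sqrt (l ^ 2 - z ^ 2) * Real.exp (-l) := by rw [hs]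
        _ ≤ l * Real.sqrt (l ^ 2 - z ^ 2) * Real.exp (-l) := by
            have := mul_le_mul_of_nonneg_right (sqrt_le l hl) (sqrt_nonneg' l)
            nlinarith [Real.exp_pos (-l), sqrt_nonneg' l]
        _ = l * Real.exp (-l) * Real.sqrt (l ^ 2 - z ^ 2) := by ring)
    have hval : (∫ l in Ioi z, (l ^ 2 - z ^ 2) * Real.exp (-l)) = (2 + 2 * z) * E := by
      have e1 : (∫ l in Ioi z, (l ^ 2 - z ^ 2) * Real.exp (-l))
          = (∫ l in Ioi z, l ^ 2 * Real.exp (-l)) - (∫ l in Ioi z, z ^ 2 * Real.exp (-l)) := by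
        have h0 : IntegrableOn (fun l : ℝ => Real.exp (-l)) (Ioi z) :=
          (exp_neg_integrableOn_Ioi z one_pos).congr_fun (fun l _ => by norm_num) measurableSet_Ioi
        rw [← integral_sub hi2 (h0.const_mul (z ^ 2))]
        congr 1; funext l; ring
      have e2 : (∫ l in Ioi z, z ^ 2 * Real.exp (-l)) = z ^ 2 * E := by
        rw [integral_const_mul]
        have : (∫ l in Ioi z, Real.exp (-l)) = E := by
          have := integral_exp_neg_Ioi z
          simpa [hE] using this
        rw [this]
      rw [e1, e2, integral_aux2 z, hE]; ring
    rw [hval] at h; exact h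
  -- positivity
  have hApos : 0 < A := lt_of_lt_of_le hEpos hA_lower
  have hBpos : 0 < B := lt_of_lt_of_le (by nlinarith) hB_lower
  -- rewrite the ratio
  have hratio : K1 z / K2 z = z * (A / B) := by
    rw [K1, K2, ← hA, ← hB]
    rw [zpow_neg, zpow_two]
    field_simp
  rw [hratio]
  set r := A / B with hr
  have hrpos : 0 < r := div_pos hApos hBpos
  have hr_le : r ≤ 1 / 2 := by
    rw [hr, div_le_div_iff₀ hBpos two_pos]
    have : 2 * A ≤ 2 * ((1 + z) * E) := by linarith
    calc A * 2 = 2 * A := by ring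
      _ ≤ 2 * ((1 + z) * E) := this
      _ = (2 + 2 * z) * E := by ring
      _ ≤ B := hB_lower
      _ = 1 * B := (one_mul B).symm
  have hr_ge : 1 ≤ r * (2 + 2 * z + z ^ 2) := by
    have hq : 0 < 2 + 2 * z + z ^ 2 := by nlinarith
    rw [hr, div_mul_eq_mul_div, le_div_iff₀ hBpos, one_mul]
    calc B ≤ (z ^ 2 + 2 * z + 2) * E := hB_upper
      _ ≤ (z ^ 2 + 2 * z + 2) * A := by nlinarith
      _ = A * (2 + 2 * z + z ^ 2) := by ring
  have hr2 : r ^ 2 ≤ 1 / 4 := by nlinarith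
  have key : (z * r) ^ 2 - z ^ 2 / 4 ≤ 0 := by
    have h := mul_le_mul_of_nonneg_left hr2 (sq_nonneg z)
    nlinarith
  have hq : (0:ℝ) < 2 + 2 * z + z ^ 2 := by nlinarith
  have h2 : 1 ≤ (r * (2 + 2 * z + z ^ 2)) ^ 2 := by nlinarith
  have h3 := poly_aux z r hz h2
  have h4 : 1 / 4 - 2 * z ≤ r ^ 2 := by
    have hq2 : (0:ℝ) < (2 + 2 * z + z ^ 2) ^ 2 := by positivity
    exact le_of_mul_le_mul_right h3 hq2
  have key2 : -(2 * z ^ 3) ≤ (z * r) ^ 2 - z ^ 2 / 4 := by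
    have h := mul_le_mul_of_nonneg_left h4 (sq_nonneg z)
    nlinarith
  rw [abs_le]
  constructor
  · linarith
  · have : (0:ℝ) ≤ 2 * z ^ 3 := by positivity
    linarith
end

section
/- For 0 < z ≤ 1/10 the expression G(z) := 3·(K_1(z)/K_2(z)) + z·(K_1(z)/K_2(z))² − z − 4/z satisfies z·G(z) < −3; in particular G(z) < 0. -/
open Real MeasureTheory

/-- `G(z) = (∂_z|_η p)/p = 3 K_1/K_2 + z (K_1/K_2)² − z − 4/z`. -/
noncomputable def G (z : ℝ) : ℝ :=
  3 * (K1 z / K2 z) + z * (K1 z / K2 z) ^ 2 - z - 4 / z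

lemma gamma_pow (s : ℕ) : IntegrableOn (fun x : ℝ => Real.exp (-x) * x ^ s) (Set.Ioi 0) := by
  have h := Real.GammaIntegral_convergent (s := (s + 1 : ℝ)) (by positivity)
  have : Set.EqOn (fun x : ℝ => Real.exp (-x) * x ^ ((s : ℝ) + 1 - 1))
      (fun x : ℝ => Real.exp (-x) * x ^ s) (Set.Ioi 0) := by
    intro x hx
    simp only
    rw [show (s : ℝ) + 1 - 1 = (s : ℝ) by ring, Real.rpow_natCast]
  exact (h.congr_fun this measurableSet_Ioi)

lemma int1 (z : ℝ) (hz : 0 < z) :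
    IntegrableOn (fun l => Real.exp (-l) * Real.sqrt (l ^ 2 - z ^ 2)) (Set.Ioi z) := by
  have hg : IntegrableOn (fun x : ℝ => Real.exp (-x) * x ^ 1) (Set.Ioi z) :=
    (gamma_pow 1).mono_set (Set.Ioi_subset_Ioi hz.le)
  refine Integrable.mono' hg ?_ ?_
  · exact (Continuous.aestronglyMeasurable (by continuity)).restrict
  · filter_upwards [ae_restrict_mem measurableSet_Ioi] with l hl
    have hlz : z < l := hl
    have h0 : (0:ℝ) < l := hz.trans hlz
    have hs : Real.sqrt (l ^ 2 - z ^ 2) ≤ l :=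
      calc Real.sqrt (l ^ 2 - z ^ 2) ≤ Real.sqrt (l ^ 2) :=
            Real.sqrt_le_sqrt (by nlinarith)
        _ = l := Real.sqrt_sq h0.le
    have : |Real.exp (-l) * Real.sqrt (l ^ 2 - z ^ 2)| =
        Real.exp (-l) * Real.sqrt (l ^ 2 - z ^ 2) := by
      rw [abs_of_nonneg]; positivity
    rw [Real.norm_eq_abs, this]
    simp only [pow_one]
    exact mul_le_mul_of_nonneg_left hs (Real.exp_pos _).le

lemma int2 (z : ℝ) (hz : 0 < z) :
    IntegrableOn (fun l => l * Real.exp (-l) * Real.sqrt (l ^ 2 - z ^ 2)) (Set.Ioi z) := by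
  have hg : IntegrableOn (fun x : ℝ => Real.exp (-x) * x ^ 2) (Set.Ioi z) :=
    (gamma_pow 2).mono_set (Set.Ioi_subset_Ioi hz.le)
  refine Integrable.mono' hg ?_ ?_
  · exact (Continuous.aestronglyMeasurable (by continuity)).restrict
  · filter_upwards [ae_restrict_mem measurableSet_Ioi] with l hl
    have hlz : z < l := hl
    have h0 : (0:ℝ) < l := hz.trans hlz
    have hs : Real.sqrt (l ^ 2 - z ^ 2) ≤ l :=
      calc Real.sqrt (l ^ 2 - z ^ 2) ≤ Real.sqrt (l ^ 2) :=
            Real.sqrt_le_sqrt (by nlinarith)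
        _ = l := Real.sqrt_sq h0.le
    have : |l * Real.exp (-l) * Real.sqrt (l ^ 2 - z ^ 2)| =
        l * Real.exp (-l) * Real.sqrt (l ^ 2 - z ^ 2) := by
      rw [abs_of_nonneg]; positivity
    rw [Real.norm_eq_abs, this]
    calc l * Real.exp (-l) * Real.sqrt (l ^ 2 - z ^ 2) ≤ l * Real.exp (-l) * l :=
          mul_le_mul_of_nonneg_left hs (by positivity)
      _ = Real.exp (-l) * l ^ 2 := by ring

/-- For `0 < z ≤ 1/10`, `z G(z) < −3`; in particular `G(z) < 0`. -/
theorem G_neg_small_z (z : ℝ) (hz : 0 < z) (hz' : z ≤ 1 / 10) :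
    z * G z < -3 ∧ G z < 0 := by
  set I1 := ∫ l in Set.Ioi z, Real.exp (-l) * Real.sqrt (l ^ 2 - z ^ 2) with hI1
  set I2 := ∫ l in Set.Ioi z, l * Real.exp (-l) * Real.sqrt (l ^ 2 - z ^ 2) with hI2
  have hI1nn : 0 ≤ I1 := by
    apply setIntegral_nonneg measurableSet_Ioi
    intro l hl
    have h0 : (0:ℝ) < l := hz.trans hl
    positivity
  have hI2nn : 0 ≤ I2 := by
    apply setIntegral_nonneg measurableSet_Ioi
    intro l hl
    have h0 : (0:ℝ) < l := hz.trans hl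
    positivity
  have hcmp : z * I1 ≤ I2 := by
    rw [hI1, ← integral_const_mul]
    apply setIntegral_mono_on ((int1 z hz).const_mul z) (int2 z hz) measurableSet_Ioi
    intro l hl
    have hlz : z < l := hl
    have h0 : (0:ℝ) < l := hz.trans hlz
    have : z * (Real.exp (-l) * Real.sqrt (l ^ 2 - z ^ 2)) =
        Real.exp (-l) * Real.sqrt (l ^ 2 - z ^ 2) * z := by ring
    rw [this]
    have : l * Real.exp (-l) * Real.sqrt (l ^ 2 - z ^ 2) =
        Real.exp (-l) * Real.sqrt (l ^ 2 - z ^ 2) * l := by ring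
    rw [this]
    exact mul_le_mul_of_nonneg_left hlz.le (by positivity)
  have hK1 : K1 z = z⁻¹ * I1 := rfl
  have hK2 : K2 z = (z ^ 2)⁻¹ * I2 := by
    have hzp : z ^ (-2 : ℤ) = (z ^ 2)⁻¹ := by
      rw [zpow_neg, zpow_two]; ring_nf
    rw [K2, hzp]
  have hK1nn : 0 ≤ K1 z := by rw [hK1]; positivity
  have hK2nn : 0 ≤ K2 z := by rw [hK2]; positivity
  have hKle : K1 z ≤ K2 z := by
    rw [hK1, hK2]
    have : z⁻¹ * I1 = (z ^ 2)⁻¹ * (z * I1) := by field_simp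
    rw [this]
    exact mul_le_mul_of_nonneg_left hcmp (by positivity)
  set r := K1 z / K2 z with hr
  have hrnn : 0 ≤ r := div_nonneg hK1nn hK2nn
  have hr1 : r ≤ 1 := div_le_one_of_le₀ hKle hK2nn
  have hzG : z * G z = 3 * z * r + z ^ 2 * r ^ 2 - z ^ 2 - 4 := by
    rw [G, ← hr]
    field_simp
  have h1 : z * G z < -3 := by
    have hr2 : r ^ 2 ≤ 1 := by nlinarith
    have h2 : z ^ 2 * r ^ 2 - z ^ 2 ≤ 0 := by
      nlinarith [mul_nonneg (sq_nonneg z) (sub_nonneg.2 hr2)]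
    have h3 : z * r ≤ z := by nlinarith
    rw [hzG]; nlinarith
  refine ⟨h1, ?_⟩
  by_contra h
  push_neg at h
  nlinarith
end

section
/- For z ≥ 70 the expression z·G(z), with G(z) := 3·(K_1(z)/K_2(z)) + z·(K_1(z)/K_2(z))² − z − 4/z, satisfies z·G(z) < −1; in particular G(z) < 0. -/
open Real MeasureTheory

open Set
open scoped ENNReal

variable {z : ℝ}


/-- weight g t = exp(-t) * (√t * √(t+2z)) -/
noncomputable def gw (z : ℝ) (t : ℝ) : ℝ := Real.exp (-t) * (Real.sqrt t * Real.sqrt (t + 2*z))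

lemma gw_cont (z : ℝ) : Continuous (gw z) := by
  unfold gw
  fun_prop

lemma integrable_exp_poly (n : ℕ) :
    IntegrableOn (fun t : ℝ => Real.exp (-t) * t ^ n) (Ioi 0) := by
  have h := Real.GammaIntegral_convergent (s := n + 1) (by positivity)
  refine h.congr_fun (fun x hx => ?_) measurableSet_Ioi
  beta_reduce
  rw [add_sub_cancel_right, Real.rpow_natCast]

lemma integrable_gw (hz : 0 < z) : IntegrableOn (gw z) (Ioi 0) := by
  have h1 : IntegrableOn (fun t : ℝ => Real.exp (-t) * t ^ 1 + 2*z * (Real.exp (-t) * t ^ 0)) (Ioi 0) :=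
    (integrable_exp_poly 1).add ((integrable_exp_poly 0).const_mul _)
  refine Integrable.mono' h1 ((gw_cont z).aestronglyMeasurable) ?_
  filter_upwards [ae_restrict_mem measurableSet_Ioi] with t ht
  have ht' : (0:ℝ) < t := ht
  have hb : Real.sqrt t * Real.sqrt (t + 2*z) ≤ t + 2*z := by
    have h2 : Real.sqrt t ≤ Real.sqrt (t + 2*z) := by
      apply Real.sqrt_le_sqrt; nlinarith
    calc Real.sqrt t * Real.sqrt (t + 2*z) ≤ Real.sqrt (t+2*z) * Real.sqrt (t+2*z) := by
          apply mul_le_mul_of_nonneg_right h2 (Real.sqrt_nonneg _)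
      _ = t + 2*z := Real.mul_self_sqrt (by nlinarith)
  rw [Real.norm_eq_abs, abs_of_nonneg (by unfold gw; positivity)]
  unfold gw
  have he : (0:ℝ) < Real.exp (-t) := Real.exp_pos _
  calc Real.exp (-t) * (Real.sqrt t * Real.sqrt (t + 2*z)) ≤ Real.exp (-t) * (t + 2*z) := by
        exact mul_le_mul_of_nonneg_left hb he.le
    _ = Real.exp (-t) * t ^ 1 + 2*z * (Real.exp (-t) * t ^ 0) := by ring

lemma integrable_t_gw (hz : 0 < z) : IntegrableOn (fun t => t * gw z t) (Ioi 0) := by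
  have h1 : IntegrableOn (fun t : ℝ => Real.exp (-t) * t ^ 2 + 2*z * (Real.exp (-t) * t ^ 1)) (Ioi 0) :=
    (integrable_exp_poly 2).add ((integrable_exp_poly 1).const_mul _)
  refine Integrable.mono' h1 (Continuous.aestronglyMeasurable (continuous_id.mul (gw_cont z))) ?_
  filter_upwards [ae_restrict_mem measurableSet_Ioi] with t ht
  have ht' : (0:ℝ) < t := ht
  have hb : Real.sqrt t * Real.sqrt (t + 2*z) ≤ t + 2*z := by
    have h2 : Real.sqrt t ≤ Real.sqrt (t + 2*z) := by
      apply Real.sqrt_le_sqrt; nlinarith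
    calc Real.sqrt t * Real.sqrt (t + 2*z) ≤ Real.sqrt (t+2*z) * Real.sqrt (t+2*z) :=
          mul_le_mul_of_nonneg_right h2 (Real.sqrt_nonneg _)
      _ = t + 2*z := Real.mul_self_sqrt (by nlinarith)
  rw [Real.norm_eq_abs, abs_of_nonneg (by unfold gw; positivity)]
  unfold gw
  have he : (0:ℝ) < Real.exp (-t) := Real.exp_pos _
  calc t * (Real.exp (-t) * (Real.sqrt t * Real.sqrt (t + 2*z)))
      ≤ t * (Real.exp (-t) * (t + 2*z)) := by
        apply mul_le_mul_of_nonneg_left _ ht'.le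
        exact mul_le_mul_of_nonneg_left hb he.le
    _ = Real.exp (-t) * t ^ 2 + 2*z * (Real.exp (-t) * t ^ 1) := by ring

lemma integrable_w : IntegrableOn (fun t : ℝ => Real.exp (-t) * Real.sqrt t) (Ioi 0) := by
  refine (Real.GammaIntegral_convergent (s := 3/2) (by norm_num)).congr_fun (fun x hx => ?_)
    measurableSet_Ioi
  beta_reduce
  rw [show (3/2 : ℝ) - 1 = 1/2 by norm_num, ← Real.sqrt_eq_rpow]

lemma integrable_tw : IntegrableOn (fun t : ℝ => t * (Real.exp (-t) * Real.sqrt t)) (Ioi 0) := by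
  refine (Real.GammaIntegral_convergent (s := 5/2) (by norm_num)).congr_fun (fun x hx => ?_)
    measurableSet_Ioi
  have hx' : (0:ℝ) < x := hx
  beta_reduce
  rw [show (5/2 : ℝ) - 1 = 1 + 1/2 by norm_num, Real.rpow_add hx', Real.rpow_one,
    ← Real.sqrt_eq_rpow]
  ring

lemma int_w : ∫ t in Ioi (0:ℝ), Real.exp (-t) * Real.sqrt t = Real.Gamma (3/2) := by
  rw [Real.Gamma_eq_integral (by norm_num : (0:ℝ) < 3/2)]
  refine setIntegral_congr_fun measurableSet_Ioi (fun x hx => ?_)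
  rw [show (3/2 : ℝ) - 1 = 1/2 by norm_num, ← Real.sqrt_eq_rpow]

lemma int_tw : ∫ t in Ioi (0:ℝ), t * (Real.exp (-t) * Real.sqrt t) = Real.Gamma (5/2) := by
  rw [Real.Gamma_eq_integral (by norm_num : (0:ℝ) < 5/2)]
  refine setIntegral_congr_fun measurableSet_Ioi (fun x hx => ?_)
  have hx' : (0:ℝ) < x := hx
  rw [show (5/2 : ℝ) - 1 = 1 + 1/2 by norm_num, Real.rpow_add hx', Real.rpow_one,
    ← Real.sqrt_eq_rpow]
  ring

lemma int_zero : ∫ t in Ioi (0:ℝ), (t - 3/2) * (Real.exp (-t) * Real.sqrt t) = 0 := by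
  have h : ∀ t : ℝ, (t - 3/2) * (Real.exp (-t) * Real.sqrt t)
      = t * (Real.exp (-t) * Real.sqrt t) - (3/2) * (Real.exp (-t) * Real.sqrt t) := by
    intro t; ring
  simp_rw [h]
  rw [integral_sub integrable_tw (integrable_w.const_mul _), MeasureTheory.integral_const_mul, int_w, int_tw]
  have := Real.Gamma_add_one (s := 3/2) (by norm_num)
  rw [show (3/2 : ℝ) + 1 = 5/2 by norm_num] at this
  rw [this]; ring

lemma key_mean (hz : 0 < z) :
    (3/2) * (∫ t in Ioi (0:ℝ), gw z t) ≤ ∫ t in Ioi (0:ℝ), t * gw z t := by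
  have hL : IntegrableOn
      (fun t : ℝ => Real.sqrt (3/2 + 2*z) * ((t - 3/2) * (Real.exp (-t) * Real.sqrt t)))
      (Ioi 0) := by
    have heq : (fun t : ℝ => (t - 3/2) * (Real.exp (-t) * Real.sqrt t))
        = (fun t : ℝ => t * (Real.exp (-t) * Real.sqrt t) - (3/2) * (Real.exp (-t) * Real.sqrt t)) :=
      funext fun t => by ring
    have : IntegrableOn (fun t : ℝ => (t - 3/2) * (Real.exp (-t) * Real.sqrt t)) (Ioi 0) := by
      rw [heq]; exact integrable_tw.sub (integrable_w.const_mul (3/2))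
    exact this.const_mul _
  have hR : IntegrableOn (fun t : ℝ => (t - 3/2) * gw z t) (Ioi 0) := by
    have heq : (fun t : ℝ => (t - 3/2) * gw z t)
        = (fun t : ℝ => t * gw z t - (3/2) * gw z t) := funext fun t => by ring
    rw [heq]; exact (integrable_t_gw hz).sub ((integrable_gw hz).const_mul (3/2))
  have hmono := setIntegral_mono_on hL hR measurableSet_Ioi (fun t ht => ?_)
  · have hLval : ∫ t in Ioi (0:ℝ),
        Real.sqrt (3/2 + 2*z) * ((t - 3/2) * (Real.exp (-t) * Real.sqrt t)) = 0 := by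
      rw [MeasureTheory.integral_const_mul, int_zero, mul_zero]
    have hRval : ∫ t in Ioi (0:ℝ), (t - 3/2) * gw z t
        = (∫ t in Ioi (0:ℝ), t * gw z t) - (3/2) * ∫ t in Ioi (0:ℝ), gw z t := by
      have h : ∀ t : ℝ, (t - 3/2) * gw z t = t * gw z t - (3/2) * gw z t := fun t => by ring
      simp_rw [h]
      rw [integral_sub (integrable_t_gw hz) ((integrable_gw hz).const_mul _),
        MeasureTheory.integral_const_mul]
    rw [hLval, hRval] at hmono
    linarith
  · -- pointwise inequality on Ioi 0
    have ht' : (0:ℝ) < t := ht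
    unfold gw
    have ha : (0:ℝ) ≤ Real.sqrt t := Real.sqrt_nonneg _
    have he : (0:ℝ) < Real.exp (-t) := Real.exp_pos _
    rcases le_total t (3/2) with hc | hc
    · have hs : Real.sqrt (t + 2*z) ≤ Real.sqrt (3/2 + 2*z) :=
        Real.sqrt_le_sqrt (by linarith)
      nlinarith [mul_nonneg (mul_nonneg (sub_nonneg.2 hs) (sub_nonneg.2 hc))
        (mul_nonneg he.le ha)]
    · have hs : Real.sqrt (3/2 + 2*z) ≤ Real.sqrt (t + 2*z) :=
        Real.sqrt_le_sqrt (by linarith)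
      nlinarith [mul_nonneg (mul_nonneg (sub_nonneg.2 hs) (sub_nonneg.2 hc))
        (mul_nonneg he.le ha)]

lemma P_pos (hz : 0 < z) : 0 < ∫ t in Ioi (0:ℝ), gw z t := by
  rw [setIntegral_pos_iff_support_of_nonneg_ae
    (Filter.Eventually.of_forall (fun t => by unfold gw; positivity)) (integrable_gw hz)]
  have hsub : Ioi (0:ℝ) ⊆ Function.support (gw z) ∩ Ioi 0 := by
    intro t ht
    have ht' : (0:ℝ) < t := ht
    refine ⟨?_, ht⟩
    have : 0 < gw z t := by
      unfold gw
      have h1 : 0 < Real.sqrt t := Real.sqrt_pos.2 ht'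
      have h2 : 0 < Real.sqrt (t + 2*z) := Real.sqrt_pos.2 (by linarith)
      positivity
    exact ne_of_gt this
  calc (0:ℝ≥0∞) < volume (Ioi (0:ℝ)) := by rw [Real.volume_Ioi]; exact ENNReal.zero_lt_top
    _ ≤ _ := measure_mono hsub

lemma shift (z : ℝ) (F : ℝ → ℝ) : ∫ l in Ioi z, F l = ∫ t in Ioi (0:ℝ), F (t + z) := by
  have h := (measurePreserving_add_right volume z).setIntegral_preimage_emb
    (measurableEmbedding_addRight z) F (Ioi z)
  have hpre : (fun x => x + z) ⁻¹' (Ioi z) = Ioi 0 := by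
    ext x; simp
  rw [← h, hpre]

lemma A_val {z : ℝ} (hz : 0 < z) :
    ∫ l in Ioi z, Real.exp (-l) * Real.sqrt (l ^ 2 - z ^ 2)
      = Real.exp (-z) * ∫ t in Ioi (0:ℝ), gw z t := by
  rw [shift, ← MeasureTheory.integral_const_mul]
  refine setIntegral_congr_fun measurableSet_Ioi (fun t ht => ?_)
  have ht' : (0:ℝ) < t := ht
  have h1 : (t + z) ^ 2 - z ^ 2 = t * (t + 2*z) := by ring
  rw [h1, Real.sqrt_mul ht'.le]
  unfold gw
  rw [show -(t+z) = -t + -z by ring, Real.exp_add]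
  ring

lemma B_val {z : ℝ} (hz : 0 < z) :
    ∫ l in Ioi z, l * Real.exp (-l) * Real.sqrt (l ^ 2 - z ^ 2)
      = Real.exp (-z) * ((∫ t in Ioi (0:ℝ), t * gw z t) + z * ∫ t in Ioi (0:ℝ), gw z t) := by
  rw [shift]
  have hcong : ∫ t in Ioi (0:ℝ), (t + z) * Real.exp (-(t+z)) * Real.sqrt ((t+z)^2 - z^2)
      = ∫ t in Ioi (0:ℝ), (Real.exp (-z) * (t * gw z t) + Real.exp (-z) * (z * gw z t)) := by
    refine setIntegral_congr_fun measurableSet_Ioi (fun t ht => ?_)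
    have ht' : (0:ℝ) < t := ht
    have h1 : (t + z) ^ 2 - z ^ 2 = t * (t + 2*z) := by ring
    rw [h1, Real.sqrt_mul ht'.le]
    unfold gw
    rw [show -(t+z) = -t + -z by ring, Real.exp_add]
    ring
  rw [hcong, integral_add (((integrable_t_gw hz).const_mul _))
    (((integrable_gw hz).const_mul z).const_mul _),
    MeasureTheory.integral_const_mul, MeasureTheory.integral_const_mul,
    MeasureTheory.integral_const_mul]
  ring

/-- For `z ≥ 70`, `z G(z) < −1`; in particular `G(z) < 0`. -/
theorem G_neg_large_z (z : ℝ) (hz : 70 ≤ z) :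
    z * G z < -1 ∧ G z < 0 := by
  have hz0 : 0 < z := by linarith
  set P := ∫ t in Ioi (0:ℝ), gw z t with hPdef
  set Q := ∫ t in Ioi (0:ℝ), t * gw z t with hQdef
  have hP : 0 < P := P_pos hz0
  have hQ : (3/2) * P ≤ Q := key_mean hz0
  have hQ0 : 0 < Q := lt_of_lt_of_le (by nlinarith) hQ
  have hD : 0 < Q + z * P := by positivity
  have hK1 : K1 z = z⁻¹ * (Real.exp (-z) * P) := by rw [K1, A_val hz0]
  have hK2 : K2 z = z ^ (-2:ℤ) * (Real.exp (-z) * (Q + z * P)) := by rw [K2, B_val hz0]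
  have hzne : z ≠ 0 := ne_of_gt hz0
  have hDne : Q + z * P ≠ 0 := ne_of_gt hD
  have hexp : Real.exp (-z) ≠ 0 := (Real.exp_pos _).ne'
  have hr : K1 z / K2 z = z * P / (Q + z * P) := by
    rw [hK1, hK2, zpow_neg, show (2:ℤ) = (2:ℕ) by rfl, zpow_natCast]
    field_simp
  have hG : z * G z = 3*z*(K1 z / K2 z) + z^2*(K1 z / K2 z)^2 - z^2 - 4 := by
    rw [G]; field_simp
  have key : 3*z^2*P*(Q+z*P) + z^4*P^2 < (z^2+3)*(Q+z*P)^2 := by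
    nlinarith [mul_nonneg (mul_nonneg (pow_nonneg hz0.le 3) (by linarith : (0:ℝ) ≤ 2*Q - 3*P)) hP.le,
      mul_nonneg (sq_nonneg z) (sq_nonneg (Q - 3/2*P)),
      mul_pos (mul_pos hz0 hz0) (mul_pos hP hP),
      sq_nonneg Q, mul_pos (mul_pos hz0 hP) hQ0]
  have hmain : z * G z < -1 := by
    rw [hG, hr]
    have hexpr : 3*z*(z*P/(Q+z*P)) + z^2*(z*P/(Q+z*P))^2 - z^2 - 4 - (-1)
        = (3*z^2*P*(Q+z*P) + z^4*P^2 - (z^2+3)*(Q+z*P)^2) / (Q+z*P)^2 := by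
      field_simp
      ring
    have hneg : (3*z^2*P*(Q+z*P) + z^4*P^2 - (z^2+3)*(Q+z*P)^2) / (Q+z*P)^2 < 0 :=
      div_neg_of_neg_of_pos (by linarith) (by positivity)
    linarith [hexpr ▸ hneg]
  refine ⟨hmain, ?_⟩
  by_contra h
  push_neg at h
  nlinarith [mul_nonneg hz0.le h]
end

section
/- For z ≥ 10 one has | K_1(z)/K_2(z) − 1 + 3/(2z) − 15/(8z²) | ≤ 16/z³. -/
open Real MeasureTheory

lemma gamma_int (c : ℝ) (hc : 0 < c + 1) :
    ∫ t in Set.Ioi (0:ℝ), Real.exp (-t) * t ^ c = Real.Gamma (c + 1) := by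
  rw [Real.Gamma_eq_integral hc]; norm_num

lemma gamma_intg (c : ℝ) (hc : 0 < c + 1) :
    IntegrableOn (fun t : ℝ => Real.exp (-t) * t ^ c) (Set.Ioi 0) := by
  simpa using Real.GammaIntegral_convergent hc

lemma G32 : Real.Gamma (3/2) = Real.sqrt π / 2 := by
  rw [show (3/2:ℝ) = 1/2 + 1 by norm_num, Real.Gamma_add_one (by norm_num),
    Real.Gamma_one_half_eq]; ring

lemma G52 : Real.Gamma (5/2) = 3/4 * Real.sqrt π := by
  rw [show (5/2:ℝ) = 3/2 + 1 by norm_num, Real.Gamma_add_one (by norm_num), G32]; ring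

lemma G72 : Real.Gamma (7/2) = 15/8 * Real.sqrt π := by
  rw [show (7/2:ℝ) = 5/2 + 1 by norm_num, Real.Gamma_add_one (by norm_num), G52]; ring

lemma G92 : Real.Gamma (9/2) = 105/16 * Real.sqrt π := by
  rw [show (9/2:ℝ) = 7/2 + 1 by norm_num, Real.Gamma_add_one (by norm_num), G72]; ring

lemma G112 : Real.Gamma (11/2) = 945/32 * Real.sqrt π := by
  rw [show (11/2:ℝ) = 9/2 + 1 by norm_num, Real.Gamma_add_one (by norm_num), G92]; ring

lemma sqrt_poly (s : ℝ) (h1 : 1 ≤ s) :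
    |s - (1 + (s^2-1)/2 - (s^2-1)^2/8)| ≤ (s^2-1)^3/16 := by
  rw [abs_le]
  constructor <;> nlinarith [pow_nonneg (by linarith : (0:ℝ) ≤ s - 1) 3,
    pow_nonneg (by linarith : (0:ℝ) ≤ s - 1) 4, pow_nonneg (by linarith : (0:ℝ) ≤ s - 1) 5,
    pow_nonneg (by linarith : (0:ℝ) ≤ s - 1) 6]

lemma sqrt3_poly (s : ℝ) (h1 : 1 ≤ s) :
    |s^3 - (1 + 3*(s^2-1)/2 + 3*(s^2-1)^2/8)| ≤ (s^2-1)^3/16 := by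
  rw [abs_le]
  constructor <;> nlinarith [pow_nonneg (by linarith : (0:ℝ) ≤ s - 1) 3,
    pow_nonneg (by linarith : (0:ℝ) ≤ s - 1) 4, pow_nonneg (by linarith : (0:ℝ) ≤ s - 1) 5,
    pow_nonneg (by linarith : (0:ℝ) ≤ s - 1) 6]

lemma sqrt_bound (u : ℝ) (hu : 0 ≤ u) :
    |Real.sqrt (1+u) - (1 + u/2 - u^2/8)| ≤ u^3/16 := by
  have hs : Real.sqrt (1+u) ^ 2 = 1 + u := Real.sq_sqrt (by linarith)
  have h1 : 1 ≤ Real.sqrt (1+u) := by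
    nlinarith [Real.sqrt_nonneg (1+u)]
  have := sqrt_poly (Real.sqrt (1+u)) h1
  rw [hs] at this
  simpa using this

lemma sqrt3_bound (u : ℝ) (hu : 0 ≤ u) :
    |Real.sqrt (1+u)^3 - (1 + 3*u/2 + 3*u^2/8)| ≤ u^3/16 := by
  have hs : Real.sqrt (1+u) ^ 2 = 1 + u := Real.sq_sqrt (by linarith)
  have h1 : 1 ≤ Real.sqrt (1+u) := by
    nlinarith [Real.sqrt_nonneg (1+u)]
  have := sqrt3_poly (Real.sqrt (1+u)) h1
  rw [hs] at this
  simpa using this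

lemma B1_bound (z : ℝ) (hz : 0 < z) :
    |(∫ t in Set.Ioi (0:ℝ), Real.exp (-t) * t ^ ((1:ℝ)/2) * Real.sqrt (1 + t/(2*z)))
      - (Real.sqrt π / 2) * (1 + 3/(8*z) - 15/(128*z^2))|
      ≤ (Real.sqrt π / 2) * (105/1024) / z^3 := by
  set f : ℝ → ℝ := fun t => Real.exp (-t) * t ^ ((1:ℝ)/2) * Real.sqrt (1 + t/(2*z)) with hf
  set g : ℝ → ℝ := fun t => Real.exp (-t) * t ^ ((1:ℝ)/2)
    + (1/(4*z)) * (Real.exp (-t) * t ^ ((3:ℝ)/2))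
    - (1/(32*z^2)) * (Real.exp (-t) * t ^ ((5:ℝ)/2)) with hgdef
  set h : ℝ → ℝ := fun t => (1/(128*z^3)) * (Real.exp (-t) * t ^ ((7:ℝ)/2)) with hhdef
  have hg_int : IntegrableOn g (Set.Ioi 0) :=
    ((gamma_intg (1/2) (by norm_num)).add ((gamma_intg (3/2) (by norm_num)).const_mul _)).sub
      ((gamma_intg (5/2) (by norm_num)).const_mul _)
  have hh_int : IntegrableOn h (Set.Ioi 0) := (gamma_intg (7/2) (by norm_num)).const_mul _
  -- pointwise bound
  have hpt : ∀ t ∈ Set.Ioi (0:ℝ), |f t - g t| ≤ h t := by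
    intro t ht
    simp only [Set.mem_Ioi] at ht
    have hu : (0:ℝ) ≤ t/(2*z) := by positivity
    have key := sqrt_bound (t/(2*z)) hu
    have h32 : t ^ ((3:ℝ)/2) = t ^ ((1:ℝ)/2) * t := by
      rw [show (3:ℝ)/2 = 1/2 + 1 by norm_num, Real.rpow_add ht, Real.rpow_one]
    have h52 : t ^ ((5:ℝ)/2) = t ^ ((1:ℝ)/2) * t^2 := by
      rw [show (5:ℝ)/2 = 1/2 + 2 by norm_num, Real.rpow_add ht, Real.rpow_two]
    have h72 : t ^ ((7:ℝ)/2) = t ^ ((1:ℝ)/2) * t^3 := by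
      rw [show (7:ℝ)/2 = 1/2 + 3 by norm_num, Real.rpow_add ht,
        show ((3:ℝ)) = ((3:ℕ):ℝ) by norm_num, Real.rpow_natCast]
    have hgt : g t = Real.exp (-t) * t ^ ((1:ℝ)/2) * (1 + (t/(2*z))/2 - (t/(2*z))^2/8) := by
      simp only [hgdef, h32, h52]
      field_simp
      ring
    have hfg : f t - g t = Real.exp (-t) * t ^ ((1:ℝ)/2)
        * (Real.sqrt (1 + t/(2*z)) - (1 + (t/(2*z))/2 - (t/(2*z))^2/8)) := by
      rw [hgt]; simp only [hf]; ring
    have hpos : (0:ℝ) ≤ Real.exp (-t) * t ^ ((1:ℝ)/2) := by positivity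
    calc |f t - g t| = Real.exp (-t) * t ^ ((1:ℝ)/2)
          * |Real.sqrt (1 + t/(2*z)) - (1 + (t/(2*z))/2 - (t/(2*z))^2/8)| := by
          rw [hfg, abs_mul, abs_of_nonneg hpos]
      _ ≤ Real.exp (-t) * t ^ ((1:ℝ)/2) * ((t/(2*z))^3/16) := by
          exact mul_le_mul_of_nonneg_left key hpos
      _ = h t := by
          simp only [hhdef, h72]
          field_simp
          ring
  -- integrability of f
  have hf_meas : AEStronglyMeasurable f (volume.restrict (Set.Ioi 0)) := by
    apply Measurable.aestronglyMeasurable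
    fun_prop
  have hf_int : IntegrableOn f (Set.Ioi 0) := by
    apply Integrable.mono' (hg_int.add hh_int) hf_meas
    rw [ae_restrict_iff' measurableSet_Ioi]
    filter_upwards with t ht
    have hb := hpt t ht
    have h0f : 0 ≤ f t := by
      simp only [Set.mem_Ioi] at ht
      have : (0:ℝ) ≤ 1 + t/(2*z) := by positivity
      simp only [hf]
      positivity
    rw [Real.norm_eq_abs, abs_of_nonneg h0f]
    have := abs_le.mp hb
    simp only [Pi.add_apply]
    linarith
  -- main estimate
  have hmain : |(∫ t in Set.Ioi (0:ℝ), f t) - ∫ t in Set.Ioi (0:ℝ), g t|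
      ≤ ∫ t in Set.Ioi (0:ℝ), h t := by
    rw [← integral_sub hf_int hg_int]
    calc |∫ t in Set.Ioi (0:ℝ), (f t - g t)| ≤ ∫ t in Set.Ioi (0:ℝ), |f t - g t| := by
          simpa [Real.norm_eq_abs] using
            norm_integral_le_integral_norm (μ := volume.restrict (Set.Ioi 0)) (fun t => f t - g t)
      _ ≤ ∫ t in Set.Ioi (0:ℝ), h t := by
          apply integral_mono_ae ((hf_int.sub hg_int).abs) hh_int
          rw [Filter.EventuallyLE, ae_restrict_iff' measurableSet_Ioi]
          filter_upwards with t ht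
          simpa using hpt t ht
  -- compute ∫ g
  have i1 := gamma_intg (1/2) (by norm_num)
  have i2 := gamma_intg (3/2) (by norm_num)
  have i3 := gamma_intg (5/2) (by norm_num)
  have i2' : IntegrableOn (fun t : ℝ => (1/(4*z)) * (Real.exp (-t) * t ^ ((3:ℝ)/2)))
      (Set.Ioi 0) := i2.const_mul _
  have i3' : IntegrableOn (fun t : ℝ => (1/(32*z^2)) * (Real.exp (-t) * t ^ ((5:ℝ)/2)))
      (Set.Ioi 0) := i3.const_mul _
  have i12 : IntegrableOn (fun t : ℝ => Real.exp (-t) * t ^ ((1:ℝ)/2)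
      + (1/(4*z)) * (Real.exp (-t) * t ^ ((3:ℝ)/2))) (Set.Ioi 0) := i1.add i2'
  have hGg : ∫ t in Set.Ioi (0:ℝ), g t
      = (Real.sqrt π / 2) * (1 + 3/(8*z) - 15/(128*z^2)) := by
    have e1 : ∫ t in Set.Ioi (0:ℝ), g t
        = (∫ t in Set.Ioi (0:ℝ), (Real.exp (-t) * t ^ ((1:ℝ)/2)
            + (1/(4*z)) * (Real.exp (-t) * t ^ ((3:ℝ)/2))))
          - ∫ t in Set.Ioi (0:ℝ), (1/(32*z^2)) * (Real.exp (-t) * t ^ ((5:ℝ)/2)) :=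
      integral_sub i12 i3'
    have e2 : ∫ t in Set.Ioi (0:ℝ), (Real.exp (-t) * t ^ ((1:ℝ)/2)
            + (1/(4*z)) * (Real.exp (-t) * t ^ ((3:ℝ)/2)))
        = (∫ t in Set.Ioi (0:ℝ), Real.exp (-t) * t ^ ((1:ℝ)/2))
          + ∫ t in Set.Ioi (0:ℝ), (1/(4*z)) * (Real.exp (-t) * t ^ ((3:ℝ)/2)) :=
      integral_add i1 i2'
    rw [e1, e2, integral_const_mul _, integral_const_mul _,
      gamma_int (1/2) (by norm_num), gamma_int (3/2) (by norm_num),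
      gamma_int (5/2) (by norm_num),
      show (1:ℝ)/2 + 1 = 3/2 by norm_num, show (3:ℝ)/2 + 1 = 5/2 by norm_num,
      show (5:ℝ)/2 + 1 = 7/2 by norm_num, G32, G52, G72]
    field_simp
    ring
  have hHh : ∫ t in Set.Ioi (0:ℝ), h t = (Real.sqrt π / 2) * (105/1024) / z^3 := by
    have e : ∫ t in Set.Ioi (0:ℝ), h t
        = (1/(128*z^3)) * ∫ t in Set.Ioi (0:ℝ), Real.exp (-t) * t ^ ((7:ℝ)/2) :=
      integral_const_mul _ _
    rw [e, gamma_int (7/2) (by norm_num), show (7:ℝ)/2 + 1 = 9/2 by norm_num, G92]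
    field_simp
    ring
  rw [hGg, hHh] at hmain
  exact hmain

lemma B2_bound (z : ℝ) (hz : 0 < z) :
    |(∫ t in Set.Ioi (0:ℝ), Real.exp (-t) * t ^ ((3:ℝ)/2) * Real.sqrt (1 + t/(2*z))^3)
      - (3 * Real.sqrt π / 4) * (1 + 15/(8*z) + 105/(128*z^2))|
      ≤ (3 * Real.sqrt π / 4) * (315/1024) / z^3 := by
  set f : ℝ → ℝ := fun t => Real.exp (-t) * t ^ ((3:ℝ)/2) * Real.sqrt (1 + t/(2*z))^3 with hf
  set g : ℝ → ℝ := fun t => Real.exp (-t) * t ^ ((3:ℝ)/2)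
    + (3/(4*z)) * (Real.exp (-t) * t ^ ((5:ℝ)/2))
    + (3/(32*z^2)) * (Real.exp (-t) * t ^ ((7:ℝ)/2)) with hgdef
  set h : ℝ → ℝ := fun t => (1/(128*z^3)) * (Real.exp (-t) * t ^ ((9:ℝ)/2)) with hhdef
  have hg_int : IntegrableOn g (Set.Ioi 0) :=
    ((gamma_intg (3/2) (by norm_num)).add ((gamma_intg (5/2) (by norm_num)).const_mul _)).add
      ((gamma_intg (7/2) (by norm_num)).const_mul _)
  have hh_int : IntegrableOn h (Set.Ioi 0) := (gamma_intg (9/2) (by norm_num)).const_mul _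
  -- pointwise bound
  have hpt : ∀ t ∈ Set.Ioi (0:ℝ), |f t - g t| ≤ h t := by
    intro t ht
    simp only [Set.mem_Ioi] at ht
    have hu : (0:ℝ) ≤ t/(2*z) := by positivity
    have key := sqrt3_bound (t/(2*z)) hu
    have h52 : t ^ ((5:ℝ)/2) = t ^ ((3:ℝ)/2) * t := by
      rw [show (5:ℝ)/2 = 3/2 + 1 by norm_num, Real.rpow_add ht, Real.rpow_one]
    have h72 : t ^ ((7:ℝ)/2) = t ^ ((3:ℝ)/2) * t^2 := by
      rw [show (7:ℝ)/2 = 3/2 + 2 by norm_num, Real.rpow_add ht, Real.rpow_two]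
    have h92 : t ^ ((9:ℝ)/2) = t ^ ((3:ℝ)/2) * t^3 := by
      rw [show (9:ℝ)/2 = 3/2 + 3 by norm_num, Real.rpow_add ht,
        show ((3:ℝ)) = ((3:ℕ):ℝ) by norm_num, Real.rpow_natCast]
    have hgt : g t = Real.exp (-t) * t ^ ((3:ℝ)/2)
        * (1 + 3*(t/(2*z))/2 + 3*(t/(2*z))^2/8) := by
      simp only [hgdef, h52, h72]
      field_simp
      ring
    have hfg : f t - g t = Real.exp (-t) * t ^ ((3:ℝ)/2)
        * (Real.sqrt (1 + t/(2*z))^3 - (1 + 3*(t/(2*z))/2 + 3*(t/(2*z))^2/8)) := by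
      rw [hgt]; simp only [hf]; ring
    have hpos : (0:ℝ) ≤ Real.exp (-t) * t ^ ((3:ℝ)/2) := by positivity
    calc |f t - g t| = Real.exp (-t) * t ^ ((3:ℝ)/2)
          * |Real.sqrt (1 + t/(2*z))^3 - (1 + 3*(t/(2*z))/2 + 3*(t/(2*z))^2/8)| := by
          rw [hfg, abs_mul, abs_of_nonneg hpos]
      _ ≤ Real.exp (-t) * t ^ ((3:ℝ)/2) * ((t/(2*z))^3/16) := by
          exact mul_le_mul_of_nonneg_left key hpos
      _ = h t := by
          simp only [hhdef, h92]
          field_simp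
          ring
  -- integrability of f
  have hf_meas : AEStronglyMeasurable f (volume.restrict (Set.Ioi 0)) := by
    apply Measurable.aestronglyMeasurable
    fun_prop
  have hf_int : IntegrableOn f (Set.Ioi 0) := by
    apply Integrable.mono' (hg_int.add hh_int) hf_meas
    rw [ae_restrict_iff' measurableSet_Ioi]
    filter_upwards with t ht
    have hb := hpt t ht
    have h0f : 0 ≤ f t := by
      simp only [Set.mem_Ioi] at ht
      have : (0:ℝ) ≤ 1 + t/(2*z) := by positivity
      simp only [hf]
      positivity
    rw [Real.norm_eq_abs, abs_of_nonneg h0f]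
    have := abs_le.mp hb
    simp only [Pi.add_apply]
    linarith
  -- main estimate
  have hmain : |(∫ t in Set.Ioi (0:ℝ), f t) - ∫ t in Set.Ioi (0:ℝ), g t|
      ≤ ∫ t in Set.Ioi (0:ℝ), h t := by
    rw [← integral_sub hf_int hg_int]
    calc |∫ t in Set.Ioi (0:ℝ), (f t - g t)| ≤ ∫ t in Set.Ioi (0:ℝ), |f t - g t| := by
          simpa [Real.norm_eq_abs] using
            norm_integral_le_integral_norm (μ := volume.restrict (Set.Ioi 0)) (fun t => f t - g t)
      _ ≤ ∫ t in Set.Ioi (0:ℝ), h t := by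
          apply integral_mono_ae ((hf_int.sub hg_int).abs) hh_int
          rw [Filter.EventuallyLE, ae_restrict_iff' measurableSet_Ioi]
          filter_upwards with t ht
          simpa using hpt t ht
  -- compute ∫ g
  have i1 := gamma_intg (3/2) (by norm_num)
  have i2 := gamma_intg (5/2) (by norm_num)
  have i3 := gamma_intg (7/2) (by norm_num)
  have i2' : IntegrableOn (fun t : ℝ => (3/(4*z)) * (Real.exp (-t) * t ^ ((5:ℝ)/2)))
      (Set.Ioi 0) := i2.const_mul _
  have i3' : IntegrableOn (fun t : ℝ => (3/(32*z^2)) * (Real.exp (-t) * t ^ ((7:ℝ)/2)))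
      (Set.Ioi 0) := i3.const_mul _
  have i12 : IntegrableOn (fun t : ℝ => Real.exp (-t) * t ^ ((3:ℝ)/2)
      + (3/(4*z)) * (Real.exp (-t) * t ^ ((5:ℝ)/2))) (Set.Ioi 0) := i1.add i2'
  have hGg : ∫ t in Set.Ioi (0:ℝ), g t
      = (3 * Real.sqrt π / 4) * (1 + 15/(8*z) + 105/(128*z^2)) := by
    have e1 : ∫ t in Set.Ioi (0:ℝ), g t
        = (∫ t in Set.Ioi (0:ℝ), (Real.exp (-t) * t ^ ((3:ℝ)/2)
            + (3/(4*z)) * (Real.exp (-t) * t ^ ((5:ℝ)/2))))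
          + ∫ t in Set.Ioi (0:ℝ), (3/(32*z^2)) * (Real.exp (-t) * t ^ ((7:ℝ)/2)) :=
      integral_add i12 i3'
    have e2 : ∫ t in Set.Ioi (0:ℝ), (Real.exp (-t) * t ^ ((3:ℝ)/2)
            + (3/(4*z)) * (Real.exp (-t) * t ^ ((5:ℝ)/2)))
        = (∫ t in Set.Ioi (0:ℝ), Real.exp (-t) * t ^ ((3:ℝ)/2))
          + ∫ t in Set.Ioi (0:ℝ), (3/(4*z)) * (Real.exp (-t) * t ^ ((5:ℝ)/2)) :=
      integral_add i1 i2'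
    rw [e1, e2, integral_const_mul _, integral_const_mul _,
      gamma_int (3/2) (by norm_num), gamma_int (5/2) (by norm_num),
      gamma_int (7/2) (by norm_num),
      show (3:ℝ)/2 + 1 = 5/2 by norm_num, show (5:ℝ)/2 + 1 = 7/2 by norm_num,
      show (7:ℝ)/2 + 1 = 9/2 by norm_num, G52, G72, G92]
    field_simp
    ring
  have hHh : ∫ t in Set.Ioi (0:ℝ), h t = (3 * Real.sqrt π / 4) * (315/1024) / z^3 := by
    have e : ∫ t in Set.Ioi (0:ℝ), h t
        = (1/(128*z^3)) * ∫ t in Set.Ioi (0:ℝ), Real.exp (-t) * t ^ ((9:ℝ)/2) :=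
      integral_const_mul _ _
    rw [e, gamma_int (9/2) (by norm_num), show (9:ℝ)/2 + 1 = 11/2 by norm_num, G112]
    field_simp
    ring
  rw [hGg, hHh] at hmain
  exact hmain

theorem final_alg (u a b : ℝ) (hu0 : 0 < u) (hu : u ≤ 1/10)
    (h1 : |a - (1 + 3*u/8 - 15*u^2/128)| ≤ 105*u^3/1024)
    (h2 : |b - (1 + 15*u/8 + 105*u^2/128)| ≤ 315*u^3/1024) :
    |a/b - (1 - 3*u/2 + 15*u^2/8)| ≤ 16*u^3 := by
  rw [abs_le] at h1 h2 ⊢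
  obtain ⟨h1l, h1r⟩ := h1
  obtain ⟨h2l, h2r⟩ := h2
  have hu3 : 0 < u^3 := by positivity
  have hb1 : 1 ≤ b := by nlinarith
  have hb0 : 0 < b := by linarith
  constructor
  · have h : (1 - 3*u/2 + 15*u^2/8 - 16*u^3) * b ≤ a := by
      nlinarith [mul_pos hu0 hu3, sq_nonneg u, mul_pos hu0 hu0]
    have := (le_div_iff₀ hb0).2 h
    linarith
  · have h : a ≤ (1 - 3*u/2 + 15*u^2/8 + 16*u^3) * b := by
      nlinarith [mul_pos hu0 hu3, sq_nonneg u, mul_pos hu0 hu0]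
    have := (div_le_iff₀ hb0).2 h
    linarith

lemma cov (z : ℝ) (F : ℝ → ℝ) :
    ∫ l in Set.Ioi z, F l = ∫ t in Set.Ioi (0:ℝ), F (t + z) := by
  have h := (measurePreserving_add_right (volume : Measure ℝ) z).setIntegral_preimage_emb
    (measurableEmbedding_addRight z) F (Set.Ioi z)
  rw [← h]
  congr 1
  ext t
  simp [Set.mem_Ioi]

lemma Kb1_eq (z : ℝ) (hz : 0 < z) :
    Kb 1 z = z⁻¹ * (Real.exp (-z) * ((2*z) ^ ((1:ℝ)/2) *
      ∫ t in Set.Ioi (0:ℝ), Real.exp (-t) * t ^ ((1:ℝ)/2) * Real.sqrt (1 + t/(2*z)))) := by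
  rw [Kb]
  have hc : ((2 ^ 1 * Nat.factorial 1 : ℝ) / (Nat.factorial (2 * 1) : ℝ)) = 1 := by
    norm_num [Nat.factorial]
  have he : ((1:ℕ) : ℝ) - 1/2 = (1:ℝ)/2 := by norm_num
  rw [hc, he, cov z]
  have hint : ∫ t in Set.Ioi (0:ℝ), Real.exp (-(t+z)) * ((t+z)^2 - z^2) ^ ((1:ℝ)/2)
      = ∫ t in Set.Ioi (0:ℝ), Real.exp (-z) * ((2*z) ^ ((1:ℝ)/2) *
        (Real.exp (-t) * t ^ ((1:ℝ)/2) * Real.sqrt (1 + t/(2*z)))) := by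
    apply setIntegral_congr_fun measurableSet_Ioi
    intro t ht
    simp only [Set.mem_Ioi] at ht
    dsimp only
    have h1 : (t+z)^2 - z^2 = t * ((2*z) * (1 + t/(2*z))) := by field_simp; ring
    have h2 : (0:ℝ) ≤ 1 + t/(2*z) := by positivity
    rw [h1, Real.mul_rpow ht.le (by positivity), Real.mul_rpow (by positivity) h2,
      show -(t+z) = -t + -z by ring, Real.exp_add,
      show (1 + t/(2*z)) ^ ((1:ℝ)/2) = Real.sqrt (1 + t/(2*z)) from (Real.sqrt_eq_rpow _).symm]
    ring
  rw [hint, integral_const_mul, integral_const_mul]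
  norm_num

lemma Kb2_eq (z : ℝ) (hz : 0 < z) :
    Kb 2 z = (1/3) * (z^2)⁻¹ * (Real.exp (-z) * ((2*z) ^ ((3:ℝ)/2) *
      ∫ t in Set.Ioi (0:ℝ), Real.exp (-t) * t ^ ((3:ℝ)/2) * Real.sqrt (1 + t/(2*z))^3)) := by
  rw [Kb]
  have hc : ((2 ^ 2 * Nat.factorial 2 : ℝ) / (Nat.factorial (2 * 2) : ℝ)) = 1/3 := by
    norm_num [Nat.factorial]
  have he : ((2:ℕ) : ℝ) - 1/2 = (3:ℝ)/2 := by norm_num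
  rw [hc, he, cov z]
  have hint : ∫ t in Set.Ioi (0:ℝ), Real.exp (-(t+z)) * ((t+z)^2 - z^2) ^ ((3:ℝ)/2)
      = ∫ t in Set.Ioi (0:ℝ), Real.exp (-z) * ((2*z) ^ ((3:ℝ)/2) *
        (Real.exp (-t) * t ^ ((3:ℝ)/2) * Real.sqrt (1 + t/(2*z))^3)) := by
    apply setIntegral_congr_fun measurableSet_Ioi
    intro t ht
    simp only [Set.mem_Ioi] at ht
    dsimp only
    have h1 : (t+z)^2 - z^2 = t * ((2*z) * (1 + t/(2*z))) := by field_simp; ring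
    have h2 : (0:ℝ) ≤ 1 + t/(2*z) := by positivity
    have h3 : (1 + t/(2*z)) ^ ((3:ℝ)/2) = Real.sqrt (1 + t/(2*z)) ^ 3 := by
      rw [Real.sqrt_eq_rpow, ← Real.rpow_natCast ((1 + t/(2*z)) ^ ((1:ℝ)/2)) 3,
        ← Real.rpow_mul h2]
      norm_num
    rw [h1, Real.mul_rpow ht.le (by positivity), Real.mul_rpow (by positivity) h2,
      show -(t+z) = -t + -z by ring, Real.exp_add, h3]
    ring
  rw [hint, integral_const_mul, integral_const_mul]
  norm_num

/-- For `z ≥ 10`, `|K_1(z)/K_2(z) − 1 + 3/(2z) − 15/(8z²)| ≤ 16/z³`. -/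
theorem ratio_large_z (z : ℝ) (hz : 10 ≤ z) :
    |Kb 1 z / Kb 2 z - 1 + 3 / (2 * z) - 15 / (8 * z ^ 2)| ≤ 16 / z ^ 3 := by
  have hz0 : (0:ℝ) < z := by linarith
  have hsp : (0:ℝ) < Real.sqrt π := Real.sqrt_pos.2 Real.pi_pos
  set B₁ := ∫ t in Set.Ioi (0:ℝ), Real.exp (-t) * t ^ ((1:ℝ)/2) * Real.sqrt (1 + t/(2*z))
    with hB1def
  set B₂ := ∫ t in Set.Ioi (0:ℝ), Real.exp (-t) * t ^ ((3:ℝ)/2) * Real.sqrt (1 + t/(2*z))^3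
    with hB2def
  have hb1 : |B₁ - (Real.sqrt π / 2) * (1 + 3/(8*z) - 15/(128*z^2))|
      ≤ (Real.sqrt π / 2) * (105/1024) / z^3 := B1_bound z hz0
  have hb2 : |B₂ - (3 * Real.sqrt π / 4) * (1 + 15/(8*z) + 105/(128*z^2))|
      ≤ (3 * Real.sqrt π / 4) * (315/1024) / z^3 := B2_bound z hz0
  set a := (2/Real.sqrt π) * B₁ with hadef
  set b := (4/(3*Real.sqrt π)) * B₂ with hbdef
  have h1 : |a - (1 + 3*z⁻¹/8 - 15*z⁻¹^2/128)| ≤ 105*z⁻¹^3/1024 := by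
    have e : a - (1 + 3*z⁻¹/8 - 15*z⁻¹^2/128)
        = (2/Real.sqrt π) * (B₁ - (Real.sqrt π/2)*(1 + 3/(8*z) - 15/(128*z^2))) := by
      rw [hadef]
      field_simp
    rw [e, abs_mul, abs_of_nonneg (by positivity : (0:ℝ) ≤ 2/Real.sqrt π)]
    calc 2/Real.sqrt π * |B₁ - (Real.sqrt π/2)*(1 + 3/(8*z) - 15/(128*z^2))|
        ≤ 2/Real.sqrt π * ((Real.sqrt π/2)*(105/1024)/z^3) :=
          mul_le_mul_of_nonneg_left hb1 (by positivity)
      _ = 105*z⁻¹^3/1024 := by field_simp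
  have h2 : |b - (1 + 15*z⁻¹/8 + 105*z⁻¹^2/128)| ≤ 315*z⁻¹^3/1024 := by
    have e : b - (1 + 15*z⁻¹/8 + 105*z⁻¹^2/128)
        = (4/(3*Real.sqrt π)) * (B₂ - (3*Real.sqrt π/4)*(1 + 15/(8*z) + 105/(128*z^2))) := by
      rw [hbdef]
      field_simp
    rw [e, abs_mul, abs_of_nonneg (by positivity : (0:ℝ) ≤ 4/(3*Real.sqrt π))]
    calc 4/(3*Real.sqrt π) * |B₂ - (3*Real.sqrt π/4)*(1 + 15/(8*z) + 105/(128*z^2))|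
        ≤ 4/(3*Real.sqrt π) * ((3*Real.sqrt π/4)*(315/1024)/z^3) :=
          mul_le_mul_of_nonneg_left hb2 (by positivity)
      _ = 315*z⁻¹^3/1024 := by field_simp
  have hu0 : (0:ℝ) < z⁻¹ := by positivity
  have huu : z⁻¹ ≤ 1/10 := by
    rw [show (1:ℝ)/10 = 10⁻¹ by norm_num]
    exact inv_anti₀ (by norm_num) hz
  have key := final_alg z⁻¹ a b hu0 huu h1 h2
  have hbpos : (0:ℝ) < b := by
    have hb := (abs_le.mp h2).1
    nlinarith [pow_pos hu0 3, pow_pos hu0 2, hu0, huu,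
      mul_le_mul_of_nonneg_left huu (le_of_lt (pow_pos hu0 2))]
  have hB2pos : (0:ℝ) < B₂ := by
    have e : (3*Real.sqrt π)/4 * b = B₂ := by rw [hbdef]; field_simp
    have := mul_pos (show (0:ℝ) < (3*Real.sqrt π)/4 by positivity) hbpos
    rwa [e] at this
  have hab : Kb 1 z / Kb 2 z = a / b := by
    rw [Kb1_eq z hz0, Kb2_eq z hz0, ← hB1def, ← hB2def]
    have h32 : (2*z) ^ ((3:ℝ)/2) = (2*z) ^ ((1:ℝ)/2) * (2*z) := by
      rw [show (3:ℝ)/2 = 1/2 + 1 by norm_num, Real.rpow_add (by linarith), Real.rpow_one]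
    rw [h32, hadef, hbdef]
    have hexp : Real.exp (-z) ≠ 0 := (Real.exp_pos _).ne'
    have hrp : (2*z) ^ ((1:ℝ)/2) ≠ 0 := (Real.rpow_pos_of_pos (by linarith) _).ne'
    field_simp
    ring
  rw [show Kb 1 z / Kb 2 z - 1 + 3/(2*z) - 15/(8*z^2)
      = a/b - (1 - 3*z⁻¹/2 + 15*z⁻¹^2/8) from by rw [hab]; ring,
    show (16:ℝ)/z^3 = 16*z⁻¹^3 from by ring]
  exact key
end

section
/- Under the kinetic relations the Gibbs-type identity ρ + p = n (∂ρ/∂n)|_η holds: viewing ρ = m₀c²n K_1(z)/K_2(z) + 3 m₀c²n/z and η = η(n,z) determined by n = 4πe⁴m₀³c³h^{-3} e^{−η/k_B} (K_2(z)/z) exp(z K_1(z)/K_2(z)), one has ρ + p = n·( (∂ρ/∂n)|_z + (∂ρ/∂z)|_n · (∂z/∂n)|_η ), where (∂z/∂n)|_η is obtained by implicit differentiation of the constraint η = const. -/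
open Real

/-- The Gibbs-type identity `ρ + p = n (∂ρ/∂n)|_η` for the kinetic relations.
Here `K1, K2` are the modified Bessel functions, assumed (as hypotheses) to satisfy the
differential identities `z K_1'(z) = K_1(z) − z K_2(z)` and
`K_2'(z) = −(2/z) K_2(z) − K_1(z)`.  The energy density is
`ρ(n,z) = m₀c² n K_1(z)/K_2(z) + 3 m₀c² n / z`, the pressure is `p = m₀c² n / z`, and the
entropy constraint is `n = A (K_2(z)/z) exp(z K_1(z)/K_2(z))` with
`A = 4π e⁴ m₀³ c³ h⁻³ exp(−η/k_B)`; the derivative `(∂z/∂n)|_η` is obtained by implicit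
differentiation of this constraint, i.e. it equals `1/dC` where `dC` is the derivative of
the right-hand side with respect to `z`. -/
theorem gibbs_identity (K1 K2 : ℝ → ℝ) (m₀ c h kB η n z : ℝ)
    (hm : 0 < m₀) (hc : 0 < c) (hh : 0 < h) (hkB : 0 < kB)
    (hz : 0 < z) (hn : 0 < n) (hK2 : 0 < K2 z)
    (dK1 dK2 : ℝ)
    (hd1 : HasDerivAt K1 dK1 z) (hd2 : HasDerivAt K2 dK2 z)
    (hid1 : z * dK1 = K1 z - z * K2 z)
    (hid2 : dK2 = -(2 / z) * K2 z - K1 z)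
    (A : ℝ)
    (hA : A = 4 * π * Real.exp 4 * m₀ ^ 3 * c ^ 3 * h⁻¹ ^ 3 * Real.exp (-η / kB))
    (hconstraint : n = A * (K2 z / z) * Real.exp (z * K1 z / K2 z))
    (Dρz dC : ℝ)
    (hDρz : HasDerivAt (fun w : ℝ =>
      m₀ * c ^ 2 * n * (K1 w / K2 w) + 3 * m₀ * c ^ 2 * n / w) Dρz z)
    (hdC : HasDerivAt (fun w : ℝ =>
      A * (K2 w / w) * Real.exp (w * K1 w / K2 w)) dC z)
    (hdC0 : dC ≠ 0) :
    (m₀ * c ^ 2 * n * (K1 z / K2 z) + 3 * m₀ * c ^ 2 * n / z) + m₀ * c ^ 2 * n / z =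
      n * ((m₀ * c ^ 2 * (K1 z / K2 z) + 3 * m₀ * c ^ 2 / z) + Dρz * (1 / dC)) := by
  have hzne : z ≠ 0 := hz.ne'
  have hbne : K2 z ≠ 0 := hK2.ne'
  set a := K1 z with ha
  set b := K2 z with hb
  set E := Real.exp (z * a / b) with hE
  have hEpos : 0 < E := Real.exp_pos _
  -- explicit derivative of ρ-function
  have hρ : HasDerivAt (fun w : ℝ =>
      m₀ * c ^ 2 * n * (K1 w / K2 w) + 3 * m₀ * c ^ 2 * n / w)
      (m₀ * c ^ 2 * n * ((dK1 * b - a * dK2) / b ^ 2)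
        + 3 * m₀ * c ^ 2 * n * (-(z ^ 2)⁻¹)) z := by
    have h1 := (hd1.div hd2 hbne).const_mul (m₀ * c ^ 2 * n)
    have h2 := (hasDerivAt_inv hzne).const_mul (3 * m₀ * c ^ 2 * n)
    have := h1.add h2
    exact this
  have hDval : Dρz = m₀ * c ^ 2 * n * ((dK1 * b - a * dK2) / b ^ 2)
        + 3 * m₀ * c ^ 2 * n * (-(z ^ 2)⁻¹) := hDρz.unique hρ
  -- explicit derivative of constraint RHS
  have hu : HasDerivAt (fun w : ℝ => w * K1 w / K2 w)
      (((1 * a + z * dK1) * b - z * a * dK2) / b ^ 2) z :=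
    ((hasDerivAt_id z).mul hd1).div hd2 hbne
  have hC : HasDerivAt (fun w : ℝ => A * (K2 w / w) * Real.exp (w * K1 w / K2 w))
      ((A * ((dK2 * z - b * 1) / z ^ 2)) * E
        + (A * (b / z)) * (E * (((1 * a + z * dK1) * b - z * a * dK2) / b ^ 2))) z := by
    have h1 := (hd2.div (hasDerivAt_id z) hzne).const_mul A
    exact h1.mul hu.exp
  have hCval : dC = (A * ((dK2 * z - b * 1) / z ^ 2)) * E
        + (A * (b / z)) * (E * (((1 * a + z * dK1) * b - z * a * dK2) / b ^ 2)) :=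
    hdC.unique hC
  have hd1' : dK1 = (a - z * b) / z := by field_simp at hid1 ⊢; linarith
  have key : m₀ * c ^ 2 * n / z * dC = n * Dρz := by
    rw [hDval, hCval, hd1', hid2, hconstraint]
    field_simp
    ring
  have hrest : m₀ * c ^ 2 * n / z = n * (Dρz * (1 / dC)) := by
    field_simp
    field_simp at key
    linarith
  calc (m₀ * c ^ 2 * n * (a / b) + 3 * m₀ * c ^ 2 * n / z) + m₀ * c ^ 2 * n / z
      = n * (m₀ * c ^ 2 * (a / b) + 3 * m₀ * c ^ 2 / z) + m₀ * c ^ 2 * n / z := by ring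
    _ = n * ((m₀ * c ^ 2 * (a / b) + 3 * m₀ * c ^ 2 / z) + Dρz * (1 / dC)) := by
        rw [hrest]; ring
end
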